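/- arXiv:1310.5801 — 5 statements merged into one kernel-verified Lean document; each statement's English description precedes it below -/
import Mathlib

section
/- Let ω : (0,1] → (0,∞) be an increasing function such that ω(t)/t^{1−ε} is decreasing on (0,1] for some ε > 0. Then there exists a constant C = C(ω) > 0 such that for every complex sequence (a_k)_{k≥0} with |a_k| ≤ ω(2^{-k}) for all k, the Hadamard gap series f(z) = Σ_{k=0}^∞ a_k z^{2^k} defines a holomorphic function on the unit disc B_1 satisfying sup_{z ∈ B_1} |f′(z)|(1−|z|)/ω(1−|z|) ≤ C; in particular f ∈ B^ω(B_1). -/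
open MeasureTheory Metric Set Filter

lemma gap_summable {r q : ℝ} (hr0 : 0 ≤ r) (hr : r < 1) (hq0 : 0 ≤ q) (hq : q ≤ 2) :
    Summable (fun k : ℕ => q ^ k * r ^ (2 ^ k - 1)) := by
  apply summable_of_ratio_norm_eventually_le (r := 1/2) (by norm_num)
  have h0 : Tendsto (fun k : ℕ => r ^ (2 ^ k)) atTop (nhds 0) :=
    (tendsto_pow_atTop_nhds_zero_of_lt_one hr0 hr).comp
      (tendsto_pow_atTop_atTop_of_one_lt (α := ℕ) one_lt_two)
  filter_upwards [h0.eventually_lt_const (by norm_num : (0:ℝ) < 1/4)] with k hk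
  have hsplit : 2 ^ (k+1) - 1 = (2 ^ k - 1) + 2 ^ k := by
    have : 1 ≤ 2 ^ k := Nat.one_le_two_pow
    omega
  have e : q ^ (k+1) * r ^ (2^(k+1) - 1) = (q * r ^ (2^k)) * (q^k * r^(2^k - 1)) := by
    rw [hsplit, pow_add, pow_succ]; ring
  rw [Real.norm_of_nonneg (by positivity), Real.norm_of_nonneg (by positivity), e]
  have h1 : q * r ^ (2 ^ k) ≤ 1/2 := by nlinarith [pow_nonneg hr0 (2^k)]
  exact mul_le_mul_of_nonneg_right h1 (by positivity)

lemma gap_key {s δ : ℝ} (hs0 : 0 < s) (hs1 : s ≤ 1) (hδ0 : 0 < δ) (hδ1 : δ ≤ 1) :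
    ∑' k : ℕ, ((2:ℝ) ^ s) ^ k * (1 - δ) ^ (2 ^ k - 1)
      ≤ (4 / ((2:ℝ) ^ s - 1) + 8) * δ ^ (-s) := by
  set q : ℝ := (2:ℝ) ^ s with hqdef
  have hq1 : 1 < q := by
    rw [hqdef, Real.one_lt_rpow_iff_of_pos (by norm_num)]
    exact Or.inl ⟨one_lt_two, hs0⟩
  have hq2 : q ≤ 2 := by
    calc q ≤ (2:ℝ) ^ (1:ℝ) := Real.rpow_le_rpow_of_exponent_le (by norm_num) hs1
    _ = 2 := Real.rpow_one 2
  set r : ℝ := 1 - δ with hrdef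
  have hr0 : 0 ≤ r := by simp only [hrdef]; linarith
  have hr1 : r < 1 := by simp only [hrdef]; linarith
  have hsum : Summable (fun k : ℕ => q ^ k * r ^ (2 ^ k - 1)) :=
    gap_summable hr0 hr1 (by linarith) hq2
  have hδs : (0:ℝ) < δ ^ (-s) := Real.rpow_pos_of_pos hδ0 _
  set n₀ : ℕ := ⌊1/δ⌋₊ with hn₀
  have hn₀1 : 1 ≤ n₀ := by
    rw [hn₀, Nat.le_floor_iff (by positivity)]
    rw [Nat.cast_one, le_div_iff₀ hδ0]; linarith
  set N : ℕ := Nat.log 2 n₀ with hN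
  have hlow : (2:ℝ) ^ N * δ ≤ 1 := by
    have h1 : (2:ℕ) ^ N ≤ n₀ := Nat.pow_log_le_self 2 (by omega)
    have h2 : (n₀ : ℝ) ≤ 1/δ := Nat.floor_le (by positivity)
    have h3 : ((2:ℝ)) ^ N ≤ 1/δ := by
      calc ((2:ℝ)) ^ N = (((2:ℕ) ^ N : ℕ) : ℝ) := by push_cast; ring
      _ ≤ (n₀ : ℝ) := by exact_mod_cast h1
      _ ≤ 1/δ := h2
    exact (le_div_iff₀ hδ0).1 h3
  have hhigh : 1 ≤ δ * 2 ^ (N+1) := by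
    have h2 : n₀ + 1 ≤ 2 ^ (N+1) := Nat.lt_pow_succ_log_self (by norm_num) n₀
    have h3 : 1/δ < (n₀:ℝ) + 1 := Nat.lt_floor_add_one _
    have h4 : 1/δ ≤ (2:ℝ)^(N+1) := by
      have h5 : ((n₀:ℝ) + 1) ≤ ((2:ℝ)^(N+1)) := by exact_mod_cast h2
      linarith
    rw [div_le_iff₀ hδ0] at h4
    linarith [h4]
  clear_value N n₀
  have hqpow : q ^ (N+1) ≤ 2 * δ ^ (-s) := by
    have h1 : q ^ (N+1) = ((2:ℝ) ^ (N+1)) ^ s := by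
      rw [hqdef, ← Real.rpow_natCast ((2:ℝ) ^ s) (N+1), ← Real.rpow_natCast (2:ℝ) (N+1),
        ← Real.rpow_mul (by norm_num), ← Real.rpow_mul (by norm_num), mul_comm]
    have h2 : (2:ℝ) ^ (N+1) ≤ 2 / δ := by
      rw [le_div_iff₀ hδ0, pow_succ]
      nlinarith [hlow]
    calc q^(N+1) = ((2:ℝ)^(N+1))^s := h1
      _ ≤ (2/δ) ^ s := Real.rpow_le_rpow (by positivity) h2 hs0.le
      _ = (2:ℝ)^s * δ^(-s) := by
          rw [Real.div_rpow (by norm_num) hδ0.le, Real.rpow_neg hδ0.le, div_eq_mul_inv]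
      _ ≤ 2 * δ^(-s) := by nlinarith
  have hhead : ∑ k ∈ Finset.range (N+1), q ^ k * r ^ (2^k - 1) ≤ 4 / (q-1) * δ ^ (-s) := by
    have h1 : ∀ k ∈ Finset.range (N+1), q^k * r^(2^k-1) ≤ q^k := by
      intro k _
      have h2 : r ^ (2^k - 1) ≤ 1 := pow_le_one₀ hr0 (by linarith)
      nlinarith [pow_pos (by linarith : (0:ℝ) < q) k]
    calc ∑ k ∈ Finset.range (N+1), q ^ k * r ^ (2^k - 1)
        ≤ ∑ k ∈ Finset.range (N+1), q ^ k := Finset.sum_le_sum h1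
      _ = (q^(N+1) - 1)/(q - 1) := geom_sum_eq (ne_of_gt hq1) _
      _ ≤ (4 * δ^(-s))/(q-1) := by
          apply div_le_div_of_nonneg_right ?_ (by linarith)
          · linarith
      _ = 4 / (q-1) * δ ^ (-s) := by ring
  have hc2 : r ^ (2^(N+1)) ≤ 3/8 := by
    have he : r ≤ Real.exp (-δ) := by
      have := Real.add_one_le_exp (-δ); simp only [hrdef]; linarith
    have h1 : r ^ (2^(N+1)) ≤ Real.exp (-δ) ^ (2^(N+1)) := pow_le_pow_left₀ hr0 he _
    have h2 : Real.exp (-δ) ^ (2^(N+1)) = Real.exp (-(δ * 2^(N+1))) := by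
      rw [← Real.exp_nat_mul]; congr 1; push_cast; ring
    have h3 : Real.exp (-(δ * 2^(N+1))) ≤ Real.exp (-1) := by
      apply Real.exp_le_exp.2
      linarith [hhigh]
    have h4 : Real.exp (-1) ≤ 3/8 := by
      rw [Real.exp_neg]
      have h5 := Real.exp_one_gt_d9
      rw [inv_le_comm₀ (by positivity) (by norm_num)]
      linarith
    linarith
  have htail : ∑' j : ℕ, q ^ (j + (N+1)) * r ^ (2 ^ (j + (N+1)) - 1) ≤ 8 * δ ^ (-s) := by
    have hterm : ∀ j : ℕ, q ^ (j + (N+1)) * r ^ (2 ^ (j + (N+1)) - 1)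
        ≤ (2 * δ^(-s)) * (3/4) ^ j := by
      intro j
      have e2 : r ^ (2^(j+(N+1)) - 1) ≤ (r ^ (2^(N+1))) ^ j := by
        rw [← pow_mul]
        apply pow_le_pow_of_le_one hr0 hr1.le
        have hj : j < 2 ^ j := Nat.lt_two_pow_self (n := j)
        have hp : 0 < 2^(N+1) := Nat.pow_pos (by norm_num)
        have h6 : (j+1) * 2^(N+1) ≤ 2^j * 2^(N+1) := Nat.mul_le_mul_right _ (by omega)
        have h7 : 2^(j+(N+1)) = 2^j * 2^(N+1) := pow_add 2 j (N+1)
        have h8 : 2^(N+1) * j + 2^(N+1) ≤ 2^j * 2^(N+1) := by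
          calc 2^(N+1) * j + 2^(N+1) = (j+1) * 2^(N+1) := by ring
          _ ≤ 2^j * 2^(N+1) := h6
        omega
      calc q ^ (j + (N+1)) * r ^ (2 ^ (j + (N+1)) - 1)
          ≤ q ^ (j + (N+1)) * (r ^ (2^(N+1))) ^ j := by
            apply mul_le_mul_of_nonneg_left e2 (by positivity)
        _ = q^(N+1) * (q * r^(2^(N+1)))^j := by rw [pow_add, mul_pow]; ring
        _ ≤ (2 * δ^(-s)) * (3/4) ^ j := by
            apply mul_le_mul hqpow ?_ (by positivity) (by positivity)
            apply pow_le_pow_left₀ (by positivity) ?_ j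
            nlinarith [pow_nonneg hr0 (2^(N+1))]
    calc ∑' j : ℕ, q ^ (j + (N+1)) * r ^ (2 ^ (j + (N+1)) - 1)
        ≤ ∑' j : ℕ, (2 * δ^(-s)) * (3/4) ^ j := by
          apply Summable.tsum_le_tsum hterm
            ((summable_nat_add_iff (f := fun k : ℕ => q ^ k * r ^ (2 ^ k - 1)) (N+1)).2 hsum)
          exact (summable_geometric_of_lt_one (by norm_num) (by norm_num)).mul_left _
      _ = (2 * δ^(-s)) * (1 - 3/4)⁻¹ := by
          rw [tsum_mul_left, tsum_geometric_of_lt_one (by norm_num) (by norm_num)]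
      _ = 8 * δ ^ (-s) := by ring
  calc ∑' k : ℕ, q ^ k * r ^ (2 ^ k - 1)
      = (∑ k ∈ Finset.range (N+1), q ^ k * r ^ (2^k - 1))
        + ∑' j : ℕ, q ^ (j + (N+1)) * r ^ (2 ^ (j + (N+1)) - 1) :=
        (Summable.sum_add_tsum_nat_add (f := fun k : ℕ => q ^ k * r ^ (2 ^ k - 1)) (N+1) hsum).symm
    _ ≤ 4 / (q-1) * δ ^ (-s) + 8 * δ ^ (-s) := add_le_add hhead htail
    _ = (4 / (q - 1) + 8) * δ ^ (-s) := by ring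

lemma omega_key (ω : ℝ → ℝ) (hωpos : ∀ t ∈ Set.Ioc (0:ℝ) 1, 0 < ω t)
    (hωmono : MonotoneOn ω (Set.Ioc (0:ℝ) 1))
    {ε : ℝ}
    (hreg : AntitoneOn (fun t : ℝ => ω t / t ^ ((1:ℝ) - ε)) (Set.Ioc (0:ℝ) 1))
    {δ t : ℝ} (hδ : δ ∈ Set.Ioc (0:ℝ) 1) (ht : t ∈ Set.Ioc (0:ℝ) 1) :
    ω t ≤ ω δ * ((t / δ) ^ ((1:ℝ) - min ε 1) + 1) := by
  have hωδ : 0 < ω δ := hωpos δ hδ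
  have hpow0 : 0 ≤ (t / δ) ^ ((1:ℝ) - min ε 1) :=
    Real.rpow_nonneg (div_nonneg ht.1.le hδ.1.le) _
  rcases le_total t δ with h | h
  · have h1 : ω t ≤ ω δ := hωmono ht hδ h
    nlinarith
  · have h2 := hreg hδ ht h
    simp only at h2
    have h3 : (0:ℝ) < t ^ ((1:ℝ)-ε) := Real.rpow_pos_of_pos ht.1 _
    have h4 : ω t ≤ ω δ / δ ^ ((1:ℝ)-ε) * t ^ ((1:ℝ)-ε) := by
      rw [← div_le_iff₀ h3]
      exact h2
    have h5 : ω δ / δ ^ ((1:ℝ)-ε) * t ^ ((1:ℝ)-ε) = ω δ * (t/δ) ^ ((1:ℝ)-ε) := by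
      rw [Real.div_rpow ht.1.le hδ.1.le]
      ring
    have h6 : (t/δ) ^ ((1:ℝ)-ε) ≤ (t/δ) ^ ((1:ℝ)- min ε 1) := by
      apply Real.rpow_le_rpow_of_exponent_le
      · rw [le_div_iff₀ hδ.1]; linarith
      · have := min_le_left ε 1; linarith
    nlinarith

/-- for `ω` increasing with `ω(t)/t^{1-ε}` decreasing for some `ε > 0`, there is a
constant `C = C(ω) > 0` such that every Hadamard gap series `Σ a_k z^{2^k}` with
`|a_k| ≤ ω(2^{-k})` is holomorphic on the unit disc and satisfies
`|f′(z)|(1-|z|) ≤ C ω(1-|z|)`; in particular `f ∈ B^ω(B_1)`. -/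
theorem stmt3 (ω : ℝ → ℝ)
    (hωpos : ∀ t ∈ Set.Ioc (0 : ℝ) 1, 0 < ω t)
    (hωmono : MonotoneOn ω (Set.Ioc (0 : ℝ) 1))
    (hωreg : ∃ ε : ℝ, 0 < ε ∧
      AntitoneOn (fun t : ℝ => ω t / t ^ ((1 : ℝ) - ε)) (Set.Ioc (0 : ℝ) 1)) :
    ∃ C : ℝ, 0 < C ∧
      ∀ a : ℕ → ℂ, (∀ k : ℕ, ‖a k‖ ≤ ω ((2 : ℝ)⁻¹ ^ k)) →
        ∀ f : ℂ → ℂ, (f = fun z : ℂ => ∑' k : ℕ, a k * z ^ (2 ^ k)) →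
          (∀ z ∈ ball (0 : ℂ) 1, HasSum (fun k : ℕ => a k * z ^ (2 ^ k)) (f z)) ∧
          DifferentiableOn ℂ f (ball 0 1) ∧
          ∀ z ∈ ball (0 : ℂ) 1, ‖deriv f z‖ * (1 - ‖z‖) ≤ C * ω (1 - ‖z‖) := by
  obtain ⟨ε, hε, hreg⟩ := hωreg
  set ε' : ℝ := min ε 1 with hε'def
  have hε'0 : 0 < ε' := lt_min hε one_pos
  have hε'1 : ε' ≤ 1 := min_le_right _ _
  have hq1 : 1 < (2:ℝ) ^ ε' := by
    rw [Real.one_lt_rpow_iff_of_pos (by norm_num)]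
    exact Or.inl ⟨one_lt_two, hε'0⟩
  refine ⟨(4 / ((2:ℝ) ^ ε' - 1) + 8) + 12, by
    have h2 : (0:ℝ) < (2:ℝ)^ε' - 1 := by linarith
    positivity, ?_⟩
  intro a ha f hf
  have hω1pos : 0 < ω 1 := hωpos 1 ⟨one_pos, le_rfl⟩
  have hω1 : ∀ k : ℕ, ‖a k‖ ≤ ω 1 := by
    intro k
    refine (ha k).trans (hωmono ⟨by positivity, pow_le_one₀ (by norm_num) (by norm_num)⟩
      ⟨one_pos, le_rfl⟩ (pow_le_one₀ (by norm_num) (by norm_num)))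
  subst hf
  have hsummand : ∀ z : ℂ, ‖z‖ < 1 → Summable (fun k : ℕ => a k * z ^ (2^k)) := by
    intro z hz
    apply Summable.of_norm_bounded (g := fun k => ω 1 * ‖z‖ ^ k)
      ((summable_geometric_of_lt_one (norm_nonneg z) hz).mul_left _)
    intro k
    rw [norm_mul, norm_pow]
    exact mul_le_mul (hω1 k)
      (pow_le_pow_of_le_one (norm_nonneg z) hz.le (Nat.lt_two_pow_self (n := k)).le)
      (by positivity) hω1pos.le
  have hkey2 : ∀ z : ℂ, ‖z‖ < 1 →
      DifferentiableAt ℂ (fun w : ℂ => ∑' k : ℕ, a k * w ^ (2^k)) z ∧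
      HasSum (fun k : ℕ => deriv (fun w : ℂ => a k * w ^ (2^k)) z)
        (deriv (fun w : ℂ => ∑' k : ℕ, a k * w ^ (2^k)) z) := by
    intro z hz
    set ρ : ℝ := (1 + ‖z‖)/2 with hρdef
    have hρ0 : 0 ≤ ρ := by positivity
    have hρ1 : ρ < 1 := by rw [hρdef]; linarith
    have hzρ : ‖z‖ < ρ := by rw [hρdef]; linarith
    have hu : Summable (fun k : ℕ => ω 1 * ρ ^ k) :=
      (summable_geometric_of_lt_one hρ0 hρ1).mul_left _
    have hF : ∀ k : ℕ, DifferentiableOn ℂ (fun w : ℂ => a k * w ^ (2^k)) (ball 0 ρ) :=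
      fun k => ((differentiable_const _).mul (differentiable_pow _)).differentiableOn
    have hFle : ∀ (k : ℕ) (w : ℂ), w ∈ ball (0:ℂ) ρ → ‖a k * w ^ (2^k)‖ ≤ ω 1 * ρ ^ k := by
      intro k w hw
      rw [mem_ball_zero_iff] at hw
      rw [norm_mul, norm_pow]
      calc ‖a k‖ * ‖w‖ ^ (2^k) ≤ ω 1 * ρ ^ (2^k) :=
            mul_le_mul (hω1 k) (pow_le_pow_left₀ (norm_nonneg w) hw.le _)
              (by positivity) hω1pos.le
        _ ≤ ω 1 * ρ ^ k := mul_le_mul_of_nonneg_left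
              (pow_le_pow_of_le_one hρ0 hρ1.le (Nat.lt_two_pow_self (n := k)).le) hω1pos.le
    have hd := Complex.differentiableOn_tsum_of_summable_norm hu hF isOpen_ball hFle
    have hzin : z ∈ ball (0:ℂ) ρ := mem_ball_zero_iff.2 hzρ
    exact ⟨hd.differentiableAt (isOpen_ball.mem_nhds hzin),
      Complex.hasSum_deriv_of_summable_norm hu hF isOpen_ball hFle hzin⟩
  refine ⟨fun z hz => ?_, fun z hz => ?_, fun z hz => ?_⟩
  · rw [mem_ball_zero_iff] at hz
    exact (hsummand z hz).hasSum
  · rw [mem_ball_zero_iff] at hz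
    exact ((hkey2 z hz).1).differentiableWithinAt
  · rw [mem_ball_zero_iff] at hz
    have hds := (hkey2 z hz).2
    have hde : ∀ k : ℕ, deriv (fun w : ℂ => a k * w ^ (2^k)) z
        = a k * (((2^k : ℕ) : ℂ) * z ^ (2^k - 1)) := by
      intro k
      rw [deriv_const_mul_field, deriv_pow_field]
    simp only [hde] at hds
    set δ : ℝ := 1 - ‖z‖ with hδdef
    have hδ0 : 0 < δ := by rw [hδdef]; linarith
    have hδ1 : δ ≤ 1 := by rw [hδdef]; linarith [norm_nonneg z]
    have hzδ : ‖z‖ = 1 - δ := by rw [hδdef]; ring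
    have hωδ : 0 < ω δ := hωpos δ ⟨hδ0, hδ1⟩
    set q : ℝ := (2:ℝ) ^ ε' with hqdef
    have hq0 : (0:ℝ) ≤ q := le_of_lt (by linarith)
    have hq2 : q ≤ 2 := by
      rw [hqdef]
      calc (2:ℝ)^ε' ≤ (2:ℝ) ^ (1:ℝ) := Real.rpow_le_rpow_of_exponent_le (by norm_num) hε'1
      _ = 2 := Real.rpow_one 2
    have hD : ∀ k : ℕ, ‖a k * (((2^k : ℕ) : ℂ) * z ^ (2^k - 1))‖
        = ‖a k‖ * ((2:ℝ)^k * ‖z‖ ^ (2^k - 1)) := by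
      intro k
      rw [norm_mul, norm_mul, norm_pow, Complex.norm_natCast]
      push_cast
      ring
    have hM : ∀ k : ℕ, ‖a k‖ * ((2:ℝ)^k * ‖z‖ ^ (2^k - 1))
        ≤ ω δ * δ ^ (ε'-1) * (q^k * ‖z‖^(2^k-1)) + ω δ * ((2:ℝ)^k * ‖z‖^(2^k-1)) := by
      intro k
      have htk : ((2:ℝ)⁻¹)^k ∈ Set.Ioc (0:ℝ) 1 :=
        ⟨by positivity, pow_le_one₀ (by norm_num) (by norm_num)⟩
      have h1 : ‖a k‖ ≤ ω δ * ((((2:ℝ)⁻¹)^k / δ) ^ ((1:ℝ)-ε') + 1) :=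
        (ha k).trans (omega_key ω hωpos hωmono hreg ⟨hδ0, hδ1⟩ htk)
      have hid : ((((2:ℝ)⁻¹)^k / δ) ^ ((1:ℝ)-ε')) * (2:ℝ)^k = δ^(ε'-1) * q^k := by
        have e1 : ((2:ℝ)⁻¹)^k / δ = (2:ℝ)^(-(k:ℝ)) * δ⁻¹ := by
          rw [div_eq_mul_inv, Real.rpow_neg (by norm_num), Real.rpow_natCast, inv_pow]
        rw [e1, Real.mul_rpow (by positivity) (by positivity),
          Real.inv_rpow hδ0.le, ← Real.rpow_neg hδ0.le,
          ← Real.rpow_mul (by norm_num : (0:ℝ) ≤ 2)]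
        rw [hqdef, ← Real.rpow_natCast ((2:ℝ)^ε') k,
          ← Real.rpow_mul (by norm_num : (0:ℝ) ≤ 2)]
        rw [show ((2:ℝ)^(k:ℕ) : ℝ) = (2:ℝ)^((k:ℕ):ℝ) from (Real.rpow_natCast 2 k).symm]
        rw [mul_right_comm, ← Real.rpow_add (by norm_num : (0:ℝ) < 2)]
        rw [show -(k:ℝ) * ((1:ℝ)-ε') + (k:ℝ) = ε' * (k:ℝ) by ring,
          show -((1:ℝ)-ε') = ε'-1 by ring]
        ring
      calc ‖a k‖ * ((2:ℝ)^k * ‖z‖ ^ (2^k - 1))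
          ≤ (ω δ * ((((2:ℝ)⁻¹)^k / δ) ^ ((1:ℝ)-ε') + 1)) * ((2:ℝ)^k * ‖z‖ ^ (2^k - 1)) :=
            mul_le_mul_of_nonneg_right h1 (by positivity)
        _ = ω δ * (((((2:ℝ)⁻¹)^k / δ) ^ ((1:ℝ)-ε')) * (2:ℝ)^k) * ‖z‖^(2^k-1)
            + ω δ * ((2:ℝ)^k * ‖z‖^(2^k-1)) := by ring
        _ = ω δ * δ ^ (ε'-1) * (q^k * ‖z‖^(2^k-1)) + ω δ * ((2:ℝ)^k * ‖z‖^(2^k-1)) := by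
            rw [hid]; ring
    have hs1 : Summable (fun k : ℕ => q^k * ‖z‖^(2^k-1)) :=
      gap_summable (norm_nonneg z) hz hq0 hq2
    have hs2 : Summable (fun k : ℕ => (2:ℝ)^k * ‖z‖^(2^k-1)) :=
      gap_summable (norm_nonneg z) hz (by norm_num) le_rfl
    have hsM : Summable (fun k : ℕ => ω δ * δ ^ (ε'-1) * (q^k * ‖z‖^(2^k-1))
        + ω δ * ((2:ℝ)^k * ‖z‖^(2^k-1))) :=
      (hs1.mul_left _).add (hs2.mul_left _)
    have hsD : Summable (fun k : ℕ => ‖a k * (((2^k : ℕ) : ℂ) * z ^ (2^k - 1))‖) := by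
      apply Summable.of_nonneg_of_le (fun k => norm_nonneg _) (fun k => ?_) hsM
      rw [hD k]; exact hM k
    have hle : ‖deriv (fun w : ℂ => ∑' k : ℕ, a k * w ^ (2^k)) z‖
        ≤ ω δ * δ ^ (ε'-1) * (∑' k : ℕ, q^k * ‖z‖^(2^k-1))
          + ω δ * (∑' k : ℕ, (2:ℝ)^k * ‖z‖^(2^k-1)) := by
      rw [← hds.tsum_eq]
      calc ‖∑' k : ℕ, a k * (((2^k : ℕ) : ℂ) * z ^ (2^k - 1))‖
          ≤ ∑' k : ℕ, ‖a k * (((2^k : ℕ) : ℂ) * z ^ (2^k - 1))‖ := norm_tsum_le_tsum_norm hsD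
        _ ≤ ∑' k : ℕ, (ω δ * δ ^ (ε'-1) * (q^k * ‖z‖^(2^k-1))
              + ω δ * ((2:ℝ)^k * ‖z‖^(2^k-1))) :=
            Summable.tsum_le_tsum (fun k => by rw [hD k]; exact hM k) hsD hsM
        _ = ω δ * δ ^ (ε'-1) * (∑' k : ℕ, q^k * ‖z‖^(2^k-1))
              + ω δ * (∑' k : ℕ, (2:ℝ)^k * ‖z‖^(2^k-1)) := by
            rw [Summable.tsum_add (hs1.mul_left _) (hs2.mul_left _), tsum_mul_left, tsum_mul_left]
    have hSq : ∑' k : ℕ, q^k * ‖z‖^(2^k-1) ≤ (4/(q-1)+8) * δ^(-ε') := by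
      have h := gap_key hε'0 hε'1 hδ0 hδ1
      rw [← hzδ] at h
      exact h
    have hS2 : ∑' k : ℕ, (2:ℝ)^k * ‖z‖^(2^k-1) ≤ 12 * δ^(-(1:ℝ)) := by
      have h := gap_key (s := 1) one_pos le_rfl hδ0 hδ1
      rw [Real.rpow_one, ← hzδ] at h
      calc ∑' k : ℕ, (2:ℝ)^k * ‖z‖^(2^k-1) ≤ (4/((2:ℝ)-1)+8) * δ^(-(1:ℝ)) := h
        _ = 12 * δ^(-(1:ℝ)) := by norm_num
    have e5 : δ ^ (ε'-1) * δ^(-ε') * δ = 1 := by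
      rw [← Real.rpow_add hδ0, show ε'-1 + -ε' = -1 by ring, Real.rpow_neg_one,
        inv_mul_cancel₀ (ne_of_gt hδ0)]
    have e6 : δ^(-(1:ℝ)) * δ = 1 := by
      rw [Real.rpow_neg_one, inv_mul_cancel₀ (ne_of_gt hδ0)]
    calc ‖deriv (fun w : ℂ => ∑' k : ℕ, a k * w ^ (2^k)) z‖ * δ
        ≤ (ω δ * δ ^ (ε'-1) * ((4/(q-1)+8) * δ^(-ε')) + ω δ * (12 * δ^(-(1:ℝ)))) * δ := by
          apply mul_le_mul_of_nonneg_right ?_ hδ0.le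
          refine hle.trans (add_le_add ?_ ?_)
          · exact mul_le_mul_of_nonneg_left hSq
              (mul_nonneg hωδ.le (Real.rpow_nonneg hδ0.le _))
          · exact mul_le_mul_of_nonneg_left hS2 hωδ.le
      _ = ω δ * (4/(q-1)+8) * (δ ^ (ε'-1) * δ^(-ε') * δ) + ω δ * 12 * (δ^(-(1:ℝ)) * δ) := by
          ring
      _ = ((4/(q-1)+8) + 12) * ω δ := by rw [e5, e6]; ring
end

section
/- Let ω : (0,1] → (0,∞) be an increasing function, and define Ψ(r) = Σ_{k=0}^∞ ω²(2^{-k}) r^{2^k − 1} for 0 ≤ r < 1. Then there exists a constant C = C(ω) > 0 such that Ψ(r) ≥ C · Φ(1−r) for all 0 ≤ r < 1. -/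
open MeasureTheory Metric Set Filter

/-- `Φ_ω(x) = 1 + ∫_x^1 ω(t)^2 / t dt`. -/
noncomputable def Phi (ω : ℝ → ℝ) (x : ℝ) : ℝ := 1 + ∫ t in Set.Ioc x 1, ω t ^ 2 / t

/-- `(1 - 2⁻ᵏ)^(2ᵏ) ≥ 1/4` for `k ≥ 1`. -/
lemma quarter_le_pow (k : ℕ) (hk : 1 ≤ k) :
    (1/4 : ℝ) ≤ (1 - (2:ℝ)⁻¹ ^ k) ^ (2 ^ k) := by
  induction k with
  | zero => omega
  | succ n ih =>
    rcases Nat.lt_or_ge n 1 with h | h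
    · interval_cases n
      norm_num
    · have hx : (0:ℝ) ≤ (2:ℝ)⁻¹ ^ n := by positivity
      have hx1 : (2:ℝ)⁻¹ ^ n ≤ 1 := pow_le_one₀ (by norm_num) (by norm_num)
      have h1 : (1 - (2:ℝ)⁻¹ ^ n) ≤ (1 - (2:ℝ)⁻¹ ^ (n+1)) ^ 2 := by
        have : (2:ℝ)⁻¹ ^ (n+1) = (2:ℝ)⁻¹ ^ n / 2 := by
          rw [pow_succ]; ring
        rw [this]; nlinarith [sq_nonneg ((2:ℝ)⁻¹ ^ n)]
      calc (1/4 : ℝ) ≤ (1 - (2:ℝ)⁻¹ ^ n) ^ (2 ^ n) := ih h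
        _ ≤ ((1 - (2:ℝ)⁻¹ ^ (n+1)) ^ 2) ^ (2 ^ n) := by
            apply pow_le_pow_left₀ (by linarith) h1
        _ = (1 - (2:ℝ)⁻¹ ^ (n+1)) ^ (2 ^ (n+1)) := by
            rw [← pow_mul]; congr 1; rw [pow_succ]; ring

/-- if `ω` is increasing, then `Ψ(r) = Σ_k ω²(2^{-k}) r^{2^k - 1}` satisfies
`Ψ(r) ≥ C Φ(1-r)` for a constant `C = C(ω) > 0`. -/
theorem stmt5 (ω : ℝ → ℝ)
    (hωpos : ∀ t ∈ Set.Ioc (0 : ℝ) 1, 0 < ω t)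
    (hωmono : MonotoneOn ω (Set.Ioc (0 : ℝ) 1)) :
    ∃ C : ℝ, 0 < C ∧ ∀ r ∈ Set.Ico (0 : ℝ) 1,
      C * Phi ω (1 - r) ≤ ∑' k : ℕ, ω ((2 : ℝ)⁻¹ ^ k) ^ 2 * r ^ (2 ^ k - 1) := by
  have hω1 : 0 < ω 1 := hωpos 1 (by norm_num)
  -- omega at dyadic points
  have hmem : ∀ k : ℕ, (2:ℝ)⁻¹ ^ k ∈ Set.Ioc (0:ℝ) 1 := by
    intro k
    exact ⟨by positivity, pow_le_one₀ (by norm_num) (by norm_num)⟩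
  have hωk_pos : ∀ k : ℕ, 0 < ω ((2:ℝ)⁻¹ ^ k) := fun k => hωpos _ (hmem k)
  have hωk_le : ∀ k : ℕ, ω ((2:ℝ)⁻¹ ^ k) ≤ ω 1 := fun k =>
    hωmono (hmem k) (by norm_num) (hmem k).2
  -- integrability on Ioc a 1 for a > 0
  have hInt : ∀ a : ℝ, 0 < a → IntegrableOn (fun t => ω t ^ 2 / t) (Set.Ioc a 1) volume := by
    intro a ha
    have hsub : Set.Ioc a 1 ⊆ Set.Ioc (0:ℝ) 1 :=
      Set.Ioc_subset_Ioc (le_of_lt ha) le_rfl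
    have hmeas : AEMeasurable ω (volume.restrict (Set.Ioc a 1)) :=
      aemeasurable_restrict_of_monotoneOn measurableSet_Ioc (hωmono.mono hsub)
    have hfm : AEStronglyMeasurable (fun t => ω t ^ 2 / t)
        (volume.restrict (Set.Ioc a 1)) :=
      ((hmeas.pow_const 2).div aemeasurable_id).aestronglyMeasurable
    refine ⟨hfm, ?_⟩
    apply HasFiniteIntegral.restrict_of_bounded (C := ω 1 ^ 2 / a)
      (measure_Ioc_lt_top)
    rw [ae_restrict_iff' measurableSet_Ioc]
    filter_upwards with t ht
    have ht0 : 0 < t := lt_of_lt_of_le ha ht.1.le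
    have hωt : 0 < ω t := hωpos t (hsub ht)
    have hωt1 : ω t ≤ ω 1 := hωmono (hsub ht) (by norm_num) ht.2
    rw [Real.norm_eq_abs, abs_of_nonneg (by positivity)]
    apply div_le_div₀ (by positivity) (by nlinarith) ha ht.1.le
  -- each dyadic piece integral bound
  have hPiece : ∀ k : ℕ, ∫ t in Set.Ioc ((2:ℝ)⁻¹ ^ (k+1)) ((2:ℝ)⁻¹ ^ k), ω t ^ 2 / t
      ≤ ω ((2:ℝ)⁻¹ ^ k) ^ 2 * Real.log 2 := by
    intro k
    set a : ℝ := (2:ℝ)⁻¹ ^ (k+1) with ha_def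
    set b : ℝ := (2:ℝ)⁻¹ ^ k with hb_def
    have ha : 0 < a := by positivity
    have hab : a ≤ b := by
      apply pow_le_pow_of_le_one (by norm_num) (by norm_num) (by omega)
    have hb1 : b ≤ 1 := (hmem k).2
    have hsub : Set.Ioc a b ⊆ Set.Ioc (0:ℝ) 1 :=
      Set.Ioc_subset_Ioc (le_of_lt ha) hb1
    have hIf : IntegrableOn (fun t => ω t ^ 2 / t) (Set.Ioc a b) volume :=
      ((hInt a ha).mono_set (Set.Ioc_subset_Ioc le_rfl hb1))
    have hIg : IntegrableOn (fun t => ω b ^ 2 / t) (Set.Ioc a b) volume := by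
      have : IntervalIntegrable (fun t => ω b ^ 2 / t) volume a b := by
        apply ContinuousOn.intervalIntegrable
        apply ContinuousOn.div continuousOn_const continuousOn_id
        intro x hx
        rw [Set.uIcc_of_le hab] at hx
        exact ne_of_gt (lt_of_lt_of_le ha hx.1)
      rwa [intervalIntegrable_iff_integrableOn_Ioc_of_le hab] at this
    have h1 : ∫ t in Set.Ioc a b, ω t ^ 2 / t ≤ ∫ t in Set.Ioc a b, ω b ^ 2 / t := by
      apply setIntegral_mono_on hIf hIg measurableSet_Ioc
      intro t ht
      have ht0 : 0 < t := lt_of_lt_of_le ha ht.1.le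
      have hωt : 0 < ω t := hωpos t (hsub ht)
      have : ω t ≤ ω b := hωmono (hsub ht) (hmem k) ht.2
      have hsq : ω t ^ 2 ≤ ω b ^ 2 := by nlinarith [hωk_pos k]
      exact div_le_div_of_nonneg_right hsq ht0.le
    have h2 : ∫ t in Set.Ioc a b, ω b ^ 2 / t = ω b ^ 2 * Real.log 2 := by
      have h0 : (0:ℝ) ∉ Set.uIcc a b := by
        rw [Set.uIcc_of_le hab]
        intro h
        exact absurd h.1 (not_le.mpr ha)
      have : ∫ t in Set.Ioc a b, (1:ℝ) / t = Real.log 2 := by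
        rw [← intervalIntegral.integral_of_le hab, integral_one_div h0]
        congr 1
        rw [hb_def, ha_def, pow_succ]
        field_simp
      calc ∫ t in Set.Ioc a b, ω b ^ 2 / t = ∫ t in Set.Ioc a b, ω b ^ 2 * (1 / t) := by
            congr 1; ext t; ring
        _ = ω b ^ 2 * ∫ t in Set.Ioc a b, (1:ℝ) / t := by
            rw [integral_const_mul]
        _ = ω b ^ 2 * Real.log 2 := by rw [this]
    exact h1.trans h2.le
  have hlog : (0:ℝ) < Real.log 2 := Real.log_pos (by norm_num)
  -- cumulative integral bound over (2^{-K}, 1]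
  have hJ : ∀ K : ℕ, ∫ t in Set.Ioc ((2:ℝ)⁻¹ ^ K) 1, ω t ^ 2 / t
      ≤ Real.log 2 * ∑ k ∈ Finset.range K, ω ((2:ℝ)⁻¹ ^ k) ^ 2 := by
    intro K
    induction K with
    | zero => simp
    | succ n ih =>
      have ha : (0:ℝ) < (2:ℝ)⁻¹ ^ (n+1) := by positivity
      have hab : (2:ℝ)⁻¹ ^ (n+1) ≤ (2:ℝ)⁻¹ ^ n :=
        pow_le_pow_of_le_one (by norm_num) (by norm_num) (by omega)
      have hb1 : (2:ℝ)⁻¹ ^ n ≤ 1 := (hmem n).2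
      have hunion : Set.Ioc ((2:ℝ)⁻¹ ^ (n+1)) 1
          = Set.Ioc ((2:ℝ)⁻¹ ^ (n+1)) ((2:ℝ)⁻¹ ^ n) ∪ Set.Ioc ((2:ℝ)⁻¹ ^ n) 1 :=
        (Set.Ioc_union_Ioc_eq_Ioc hab hb1).symm
      have hI1 : IntegrableOn (fun t => ω t ^ 2 / t)
          (Set.Ioc ((2:ℝ)⁻¹ ^ (n+1)) ((2:ℝ)⁻¹ ^ n)) volume :=
        (hInt _ ha).mono_set (Set.Ioc_subset_Ioc le_rfl hb1)
      have hI2 : IntegrableOn (fun t => ω t ^ 2 / t) (Set.Ioc ((2:ℝ)⁻¹ ^ n) 1) volume :=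
        hInt _ (by positivity)
      have hdisj : Disjoint (Set.Ioc ((2:ℝ)⁻¹ ^ (n+1)) ((2:ℝ)⁻¹ ^ n))
          (Set.Ioc ((2:ℝ)⁻¹ ^ n) 1) := Set.Ioc_disjoint_Ioc_of_le le_rfl
      rw [hunion, setIntegral_union hdisj measurableSet_Ioc hI1 hI2,
        Finset.sum_range_succ]
      have := hPiece n
      nlinarith [hlog]
  classical
  -- the constant
  have hD : (0:ℝ) < (ω 1 ^ 2)⁻¹ + 4 * Real.log 2 := by positivity
  refine ⟨((ω 1 ^ 2)⁻¹ + 4 * Real.log 2)⁻¹, inv_pos.mpr hD, ?_⟩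
  intro r hr
  obtain ⟨hr0, hr1⟩ := hr
  have h1r : 0 < 1 - r := by linarith
  -- summability of the series
  have hsummable : Summable (fun k : ℕ => ω ((2:ℝ)⁻¹ ^ k) ^ 2 * r ^ (2 ^ k - 1)) := by
    apply Summable.of_nonneg_of_le (fun k => by positivity) (fun k => ?_)
      ((summable_geometric_of_lt_one hr0 hr1).mul_left (ω 1 ^ 2))
    have h1 : ω ((2:ℝ)⁻¹ ^ k) ^ 2 ≤ ω 1 ^ 2 := by nlinarith [hωk_pos k, hωk_le k]
    have h2 : r ^ (2 ^ k - 1) ≤ r ^ k :=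
      pow_le_pow_of_le_one hr0 hr1.le (by have := Nat.lt_two_pow_self (n := k); omega)
    exact mul_le_mul h1 h2 (by positivity) (by positivity)
  set S := ∑' k : ℕ, ω ((2 : ℝ)⁻¹ ^ k) ^ 2 * r ^ (2 ^ k - 1) with hSdef
  have hS0 : ω 1 ^ 2 ≤ S := by
    have h0 := Summable.le_tsum hsummable 0 (fun j _ => by positivity)
    rw [hSdef]
    simpa only [pow_zero, Nat.pow_zero, Nat.sub_self, mul_one] using h0
  have hSnn : (0:ℝ) ≤ S := le_trans (by positivity) hS0
  -- choose the dyadic cutoff K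
  have hex : ∃ n : ℕ, (2:ℝ)⁻¹ ^ n ≤ 1 - r := by
    obtain ⟨n, hn⟩ := exists_pow_lt_of_lt_one h1r (by norm_num : (2:ℝ)⁻¹ < 1)
    exact ⟨n, hn.le⟩
  set K := Nat.find hex with hKdef
  have hK : (2:ℝ)⁻¹ ^ K ≤ 1 - r := Nat.find_spec hex
  have hKmin : ∀ k < K, 1 - r < (2:ℝ)⁻¹ ^ k := fun k hk =>
    lt_of_not_ge (Nat.find_min hex hk)
  -- integral comparison
  have hIle : ∫ t in Set.Ioc (1-r) 1, ω t ^ 2 / t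
      ≤ ∫ t in Set.Ioc ((2:ℝ)⁻¹ ^ K) 1, ω t ^ 2 / t := by
    apply setIntegral_mono_set (hInt _ (by positivity)) ?_
      (HasSubset.Subset.eventuallyLE (Set.Ioc_subset_Ioc hK le_rfl))
    rw [EventuallyLE, ae_restrict_iff' measurableSet_Ioc]
    filter_upwards with t ht
    have ht0 : (0:ℝ) < t := lt_of_lt_of_le (by positivity) ht.1.le
    simpa using div_nonneg (by positivity : (0:ℝ) ≤ ω t ^ 2) ht0.le
  -- finite sum lower bound against tsum
  have hsum_le : (∑ k ∈ Finset.range K, ω ((2:ℝ)⁻¹ ^ k) ^ 2) * (1/4 : ℝ) ≤ S := by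
    rw [Finset.sum_mul]
    refine le_trans ?_ (Summable.sum_le_tsum (Finset.range K) (fun k _ => by positivity) hsummable)
    apply Finset.sum_le_sum
    intro k hk
    rw [Finset.mem_range] at hk
    have hrk : 1 - (2:ℝ)⁻¹ ^ k ≤ r := by have := hKmin k hk; linarith
    have hq : (1/4 : ℝ) ≤ r ^ (2 ^ k - 1) := by
      rcases Nat.eq_zero_or_pos k with h0 | h1
      · subst h0; norm_num
      · have hquarter := quarter_le_pow k h1
        have hbase : (0:ℝ) ≤ 1 - (2:ℝ)⁻¹ ^ k := by have := (hmem k).2; linarith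
        calc (1/4:ℝ) ≤ (1 - (2:ℝ)⁻¹ ^ k) ^ (2 ^ k) := hquarter
          _ ≤ r ^ (2 ^ k) := pow_le_pow_left₀ hbase hrk _
          _ ≤ r ^ (2 ^ k - 1) := pow_le_pow_of_le_one hr0 hr1.le (Nat.sub_le _ _)
    exact mul_le_mul_of_nonneg_left hq (by positivity)
  -- combine everything
  have hI4 : ∫ t in Set.Ioc (1-r) 1, ω t ^ 2 / t ≤ 4 * Real.log 2 * S := by
    have h2 : Real.log 2 * ∑ k ∈ Finset.range K, ω ((2:ℝ)⁻¹ ^ k) ^ 2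
        ≤ 4 * Real.log 2 * S := by nlinarith [hsum_le, hlog]
    exact le_trans (hIle.trans (hJ K)) h2
  have h1S : 1 ≤ (ω 1 ^ 2)⁻¹ * S := by
    have h := mul_le_mul_of_nonneg_left hS0
      (inv_nonneg.mpr (le_of_lt (show (0:ℝ) < ω 1 ^ 2 by positivity)))
    rwa [inv_mul_cancel₀ (ne_of_gt (show (0:ℝ) < ω 1 ^ 2 by positivity))] at h
  have hfin : Phi ω (1 - r) ≤ ((ω 1 ^ 2)⁻¹ + 4 * Real.log 2) * S := by
    unfold Phi
    have := hI4
    nlinarith [h1S]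
  calc ((ω 1 ^ 2)⁻¹ + 4 * Real.log 2)⁻¹ * Phi ω (1 - r)
      ≤ ((ω 1 ^ 2)⁻¹ + 4 * Real.log 2)⁻¹ * (((ω 1 ^ 2)⁻¹ + 4 * Real.log 2) * S) :=
        mul_le_mul_of_nonneg_left hfin (by positivity)
    _ = S := by field_simp
end

section
/- Let ω : (0,1] → (0,∞) be an increasing function. Then there exists a constant C = C(ω) > 0 such that Φ(1−r) ≤ C · Φ(1−r²) for all 0 ≤ r < 1; moreover one may take Φ(1−r) ≤ 4·Φ(1−r²) for all 2/3 < r < 1. -/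
open MeasureTheory Metric Set Filter

lemma aux_integrable (ω : ℝ → ℝ)
    (hωpos : ∀ t ∈ Set.Ioc (0 : ℝ) 1, 0 < ω t)
    (hωmono : MonotoneOn ω (Set.Ioc (0 : ℝ) 1))
    {a b : ℝ} (ha : 0 < a) (hb : b ≤ 1) :
    IntegrableOn (fun t => ω t ^ 2 / t) (Set.Ioc a b) := by
  have hsub : Set.Ioc a b ⊆ Set.Ioc (0:ℝ) 1 := Set.Ioc_subset_Ioc ha.le hb
  have hmes : AEMeasurable ω (volume.restrict (Set.Ioc a b)) :=
    aemeasurable_restrict_of_monotoneOn measurableSet_Ioc (hωmono.mono hsub)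
  refine ⟨((hmes.pow_const 2).div aemeasurable_id).aestronglyMeasurable, ?_⟩
  refine HasFiniteIntegral.restrict_of_bounded (C := ω 1 ^ 2 / a) measure_Ioc_lt_top ?_
  rw [ae_restrict_iff' measurableSet_Ioc]
  filter_upwards with t ht
  have ht0 : 0 < t := lt_of_lt_of_le ha ht.1.le
  have hωt : 0 < ω t := hωpos t (hsub ht)
  have h1 : ω t ≤ ω 1 := hωmono (hsub ht) (by norm_num) (le_trans ht.2 hb)
  rw [Real.norm_eq_abs, abs_div, abs_of_pos ht0, abs_of_nonneg (by positivity)]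
  exact div_le_div₀ (by positivity) (by nlinarith) ha ht.1.le

lemma aux_inv_integrable {a b : ℝ} (ha : 0 < a) : IntegrableOn (fun t : ℝ => t⁻¹) (Set.Ioc a b) := by
  rcases le_or_gt a b with h | h
  · exact (intervalIntegral.intervalIntegrable_inv (f := id) (fun x hx => by
      rcases hx with ⟨h1, h2⟩
      rw [min_eq_left h] at h1
      exact (lt_of_lt_of_le ha h1).ne') continuousOn_id).1
  · simp [Set.Ioc_eq_empty (not_lt.mpr h.le), integrableOn_empty]

lemma aux_log (a b : ℝ) (ha : 0 < a) (hab : a ≤ b) :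
    ∫ t in Set.Ioc a b, t⁻¹ = Real.log (b / a) := by
  rw [← intervalIntegral.integral_of_le hab]
  exact integral_inv (by
    intro h
    rcases h with ⟨h1, h2⟩
    rw [min_eq_left hab] at h1
    exact absurd h1 (not_le.mpr ha))

/-- upper bound: `∫_a^b ω²/t ≤ ω(b)² log(b/a)`. -/
lemma aux_upper (ω : ℝ → ℝ)
    (hωpos : ∀ t ∈ Set.Ioc (0 : ℝ) 1, 0 < ω t)
    (hωmono : MonotoneOn ω (Set.Ioc (0 : ℝ) 1))
    {a b : ℝ} (ha : 0 < a) (hab : a ≤ b) (hb : b ≤ 1) :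
    ∫ t in Set.Ioc a b, ω t ^ 2 / t ≤ ω b ^ 2 * Real.log (b / a) := by
  have hb0 : 0 < b := lt_of_lt_of_le ha hab
  have hbmem : b ∈ Set.Ioc (0:ℝ) 1 := ⟨hb0, hb⟩
  have h1 : ∫ t in Set.Ioc a b, ω t ^ 2 / t ≤ ∫ t in Set.Ioc a b, ω b ^ 2 * t⁻¹ := by
    apply setIntegral_mono_on (aux_integrable ω hωpos hωmono ha hb)
      ((aux_inv_integrable ha).const_mul _) measurableSet_Ioc
    intro t ht
    have ht0 : 0 < t := lt_of_lt_of_le ha ht.1.le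
    have htmem : t ∈ Set.Ioc (0:ℝ) 1 := ⟨ht0, ht.2.trans hb⟩
    have hωt : 0 < ω t := hωpos t htmem
    have h2 : ω t ≤ ω b := hωmono htmem hbmem ht.2
    rw [div_eq_mul_inv]
    have hinv : 0 ≤ t⁻¹ := inv_nonneg.mpr ht0.le
    exact mul_le_mul_of_nonneg_right (by nlinarith) hinv
  calc ∫ t in Set.Ioc a b, ω t ^ 2 / t ≤ ∫ t in Set.Ioc a b, ω b ^ 2 * t⁻¹ := h1
    _ = ω b ^ 2 * ∫ t in Set.Ioc a b, t⁻¹ := by rw [integral_const_mul]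
    _ = ω b ^ 2 * Real.log (b / a) := by rw [aux_log a b ha hab]

/-- lower bound: `ω(b)² log(1/b) ≤ ∫_b^1 ω²/t`. -/
lemma aux_lower (ω : ℝ → ℝ)
    (hωpos : ∀ t ∈ Set.Ioc (0 : ℝ) 1, 0 < ω t)
    (hωmono : MonotoneOn ω (Set.Ioc (0 : ℝ) 1))
    {b : ℝ} (hb0 : 0 < b) (hb : b ≤ 1) :
    ω b ^ 2 * Real.log (1 / b) ≤ ∫ t in Set.Ioc b 1, ω t ^ 2 / t := by
  have hbmem : b ∈ Set.Ioc (0:ℝ) 1 := ⟨hb0, hb⟩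
  have h1 : ∫ t in Set.Ioc b 1, ω b ^ 2 * t⁻¹ ≤ ∫ t in Set.Ioc b 1, ω t ^ 2 / t := by
    apply setIntegral_mono_on ((aux_inv_integrable hb0).const_mul _)
      (aux_integrable ω hωpos hωmono hb0 le_rfl) measurableSet_Ioc
    intro t ht
    have htmem : t ∈ Set.Ioc (0:ℝ) 1 := ⟨hb0.trans ht.1, ht.2⟩
    have hωb : 0 < ω b := hωpos b hbmem
    have h2 : ω b ≤ ω t := hωmono hbmem htmem ht.1.le
    rw [div_eq_mul_inv]
    have ht0 : 0 < t := hb0.trans ht.1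
    have hinv : 0 ≤ t⁻¹ := inv_nonneg.mpr ht0.le
    exact mul_le_mul_of_nonneg_right (by nlinarith) hinv
  calc ω b ^ 2 * Real.log (1 / b) = ω b ^ 2 * ∫ t in Set.Ioc b 1, t⁻¹ := by
        rw [aux_log b 1 hb0 hb]
    _ = ∫ t in Set.Ioc b 1, ω b ^ 2 * t⁻¹ := (integral_const_mul _ _).symm
    _ ≤ _ := h1

lemma aux_split (ω : ℝ → ℝ)
    (hωpos : ∀ t ∈ Set.Ioc (0 : ℝ) 1, 0 < ω t)
    (hωmono : MonotoneOn ω (Set.Ioc (0 : ℝ) 1))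
    {a b : ℝ} (ha : 0 < a) (hab : a ≤ b) (hb : b ≤ 1) :
    Phi ω a = Phi ω b + ∫ t in Set.Ioc a b, ω t ^ 2 / t := by
  unfold Phi
  have := setIntegral_union (f := fun t => ω t ^ 2 / t) (μ := volume)
    (Set.Ioc_disjoint_Ioc_of_le (a := a) (b := b) (c := b) (d := 1) le_rfl) measurableSet_Ioc
    (aux_integrable ω hωpos hωmono ha hb)
    (aux_integrable ω hωpos hωmono (lt_of_lt_of_le ha hab) le_rfl)
  rw [Set.Ioc_union_Ioc_eq_Ioc hab hb] at this
  rw [this]; ring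

lemma int_nonneg (ω : ℝ → ℝ) {x : ℝ} (hx : 0 ≤ x) :
    0 ≤ ∫ t in Set.Ioc x 1, ω t ^ 2 / t := by
  apply setIntegral_nonneg measurableSet_Ioc
  intro t ht
  have ht0 : 0 < t := lt_of_le_of_lt hx ht.1
  exact div_nonneg (sq_nonneg _) ht0.le

lemma phi_pos (ω : ℝ → ℝ) {x : ℝ} (hx : 0 ≤ x) : 1 ≤ Phi ω x := by
  unfold Phi
  linarith [int_nonneg ω (x := x) hx]

/-- if `ω` is increasing then `Φ(1-r) ≤ C Φ(1-r²)` on `[0,1)` for some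
`C = C(ω) > 0`, and moreover `Φ(1-r) ≤ 4 Φ(1-r²)` for `2/3 < r < 1`. -/
theorem stmt8 (ω : ℝ → ℝ)
    (hωpos : ∀ t ∈ Set.Ioc (0 : ℝ) 1, 0 < ω t)
    (hωmono : MonotoneOn ω (Set.Ioc (0 : ℝ) 1)) :
    (∃ C : ℝ, 0 < C ∧ ∀ r ∈ Set.Ico (0 : ℝ) 1, Phi ω (1 - r) ≤ C * Phi ω (1 - r ^ 2)) ∧
    ∀ r : ℝ, 2 / 3 < r → r < 1 → Phi ω (1 - r) ≤ 4 * Phi ω (1 - r ^ 2) := by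
  constructor
  · refine ⟨1 + ω 1 ^ 2, by nlinarith [hωpos 1 (by norm_num)], fun r hr => ?_⟩
    obtain ⟨hr0, hr1⟩ := hr
    set a := 1 - r with hadef
    set b := 1 - r ^ 2 with hbdef
    have ha : 0 < a := by simp [hadef]; linarith
    have hab : a ≤ b := by nlinarith
    have hb : b ≤ 1 := by nlinarith
    have hb0 : 0 < b := lt_of_lt_of_le ha hab
    have hsplit := aux_split ω hωpos hωmono ha hab hb
    have hupper := aux_upper ω hωpos hωmono ha hab hb
    have hlog : Real.log (b / a) ≤ 1 := by
      have h2 : b / a ≤ 2 := by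
        rw [div_le_iff₀ ha]
        nlinarith
      calc Real.log (b / a) ≤ Real.log 2 := Real.log_le_log (div_pos hb0 ha) h2
        _ ≤ 1 := by
          have := Real.log_le_sub_one_of_pos (x := 2) (by norm_num)
          linarith
    have hω1 : ω b ≤ ω 1 := hωmono ⟨hb0, hb⟩ (by norm_num) hb
    have hωb : 0 < ω b := hωpos b ⟨hb0, hb⟩
    have hphi : 1 ≤ Phi ω b := phi_pos ω hb0.le
    have hloglb : 0 ≤ Real.log (b / a) := Real.log_nonneg (by
      rw [le_div_iff₀ ha]; linarith)
    have : ω b ^ 2 * Real.log (b / a) ≤ ω 1 ^ 2 := by nlinarith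
    calc Phi ω a = Phi ω b + ∫ t in Set.Ioc a b, ω t ^ 2 / t := hsplit
      _ ≤ Phi ω b + ω 1 ^ 2 := by linarith [hupper]
      _ ≤ (1 + ω 1 ^ 2) * Phi ω b := by nlinarith [hωpos 1 (show (1:ℝ) ∈ Set.Ioc (0:ℝ) 1 by norm_num)]
  · intro r hr23 hr1
    set a := 1 - r with hadef
    set b := 1 - r ^ 2 with hbdef
    have hr0 : 0 < r := lt_trans (by norm_num) hr23
    have ha : 0 < a := by simp [hadef]; linarith
    have hab : a ≤ b := by nlinarith
    have hb : b ≤ 1 := by nlinarith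
    have hb0 : 0 < b := lt_of_lt_of_le ha hab
    have hsplit := aux_split ω hωpos hωmono ha hab hb
    have hupper := aux_upper ω hωpos hωmono ha hab hb
    have hlower := aux_lower ω hωpos hωmono hb0 hb
    -- log(b/a) ≤ log 2, log(1/b) ≥ log(9/5), and log 2 ≤ 3 log(9/5)
    have hlog1 : Real.log (b / a) ≤ Real.log 2 := by
      apply Real.log_le_log (div_pos hb0 ha)
      rw [div_le_iff₀ ha]; nlinarith
    have hlog2 : Real.log (9 / 5 : ℝ) ≤ Real.log (1 / b) := by
      apply Real.log_le_log (by norm_num)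
      rw [le_div_iff₀ hb0]; nlinarith
    have hlog3 : Real.log 2 ≤ 3 * Real.log (9 / 5 : ℝ) := by
      have h : (3 : ℝ) * Real.log (9 / 5) = Real.log ((9 / 5 : ℝ) ^ (3 : ℕ)) := by
        rw [Real.log_pow]; push_cast; ring
      rw [h]
      apply Real.log_le_log (by norm_num)
      norm_num
    have hωb : 0 < ω b := hωpos b ⟨hb0, hb⟩
    have key : ω b ^ 2 * Real.log (b / a) ≤ 3 * ∫ t in Set.Ioc b 1, ω t ^ 2 / t := by
      calc ω b ^ 2 * Real.log (b / a) ≤ ω b ^ 2 * (3 * Real.log (1 / b)) := by nlinarith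
        _ = 3 * (ω b ^ 2 * Real.log (1 / b)) := by ring
        _ ≤ 3 * ∫ t in Set.Ioc b 1, ω t ^ 2 / t := by linarith
    have hI : 0 ≤ ∫ t in Set.Ioc b 1, ω t ^ 2 / t := int_nonneg ω hb0.le
    calc Phi ω a = Phi ω b + ∫ t in Set.Ioc a b, ω t ^ 2 / t := hsplit
      _ ≤ Phi ω b + 3 * ∫ t in Set.Ioc b 1, ω t ^ 2 / t := by linarith
      _ ≤ 4 * Phi ω b := by
          have : ∫ t in Set.Ioc b 1, ω t ^ 2 / t ≤ Phi ω b := by unfold Phi; linarith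
          linarith [phi_pos ω (x := b) hb0.le]
end

section
/- Let ω : (0,1] → (0,∞) be increasing with ω(t)/t^{1−ε} decreasing on (0,1] for some ε > 0. Then there exists a constant C = C(ω) > 0 with the following property: if for each k ≥ 0, P_k : ℂ^d → ℂ is a holomorphic homogeneous polynomial of degree 2^k (i.e., P_k(λz) = λ^{2^k} P_k(z) for λ ∈ ℂ) with sup_{ζ ∈ S_d} |P_k(ζ)| ≤ 1, and η_k ∈ ℂ satisfies |η_k| ≤ 1 for all k, then the series f(z) = Σ_{k=0}^∞ η_k ω(2^{-k}) P_k(z) converges locally uniformly on B_d to a holomorphic function with ‖f‖_{B^ω(B_d)} ≤ C. -/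
open MeasureTheory Metric Set Filter

noncomputable instance (d : ℕ) : MeasurableSpace (EuclideanSpace ℂ (Fin d)) := borel _
instance (d : ℕ) : BorelSpace (EuclideanSpace ℂ (Fin d)) := ⟨rfl⟩

/-- A fixed additive Haar (Lebesgue) measure on `ℂ^d`. -/
noncomputable def haarCd (d : ℕ) : Measure (EuclideanSpace ℂ (Fin d)) :=
  (Module.Basis.ofVectorSpace ℝ (EuclideanSpace ℂ (Fin d))).addHaar

/-- The normalized surface measure `σ_d` on the unit sphere of `ℂ^d`. -/
noncomputable def sigmaD (d : ℕ) : Measure (sphere (0 : EuclideanSpace ℂ (Fin d)) 1) :=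
  ((haarCd d).toSphere Set.univ)⁻¹ • (haarCd d).toSphere

/-- The radial derivative `Rf(z) = Σ z_j ∂f/∂z_j (z)` of a holomorphic function. -/
noncomputable def radDeriv {d : ℕ} (f : EuclideanSpace ℂ (Fin d) → ℂ)
    (z : EuclideanSpace ℂ (Fin d)) : ℂ := fderiv ℂ f z z

section Aux

lemma fderiv_bound {E : Type*} [NormedAddCommGroup E] [NormedSpace ℂ E]
    {Q : E → ℂ} (hQ : Differentiable ℂ Q) {x : E} {δ M : ℝ} (hδ : 0 < δ) (hM0 : 0 ≤ M)
    (hM : ∀ y : E, ‖y‖ ≤ ‖x‖ + δ → ‖Q y‖ ≤ M) : ‖fderiv ℂ Q x‖ ≤ M / δ := by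
  apply ContinuousLinearMap.opNorm_le_bound _ (div_nonneg hM0 hδ.le)
  intro v
  rcases eq_or_ne v 0 with hv | hv
  · simp [hv, div_nonneg hM0 hδ.le]
  have hvn : 0 < ‖v‖ := norm_pos_iff.mpr hv
  set g : ℂ → ℂ := fun l => Q (x + l • v) with hg
  have hlin : Differentiable ℂ (fun l : ℂ => x + l • v) := by
    apply Differentiable.const_add
    exact fun l => ((hasDerivAt_id l).smul_const v).differentiableAt
  have hgd : Differentiable ℂ g := fun l => DifferentiableAt.comp l (hQ _) (hlin l)
  have hder : HasDerivAt g (fderiv ℂ Q x v) 0 := by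
    have h1 : HasDerivAt (fun l : ℂ => x + l • v) v 0 := by
      simpa using ((hasDerivAt_id (0:ℂ)).smul_const v).const_add x
    have h2 := (hQ (x + (0:ℂ) • v)).hasFDerivAt.comp_hasDerivAt 0 h1
    rw [zero_smul, add_zero] at h2; exact h2
  set ρ : ℝ := δ / ‖v‖ with hρ
  have hρpos : 0 < ρ := div_pos hδ hvn
  have key : ‖deriv g 0‖ ≤ M / ρ := by
    apply Complex.norm_deriv_le_of_forall_mem_sphere_norm_le hρpos hgd.diffContOnCl
    intro l hl
    have hln : ‖l‖ = ρ := by simpa [Complex.dist_eq] using hl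
    apply hM
    have : ‖x + l • v‖ ≤ ‖x‖ + ‖l • v‖ := norm_add_le _ _
    have hlv : ‖l • v‖ = δ := by
      rw [norm_smul, hln, hρ]; field_simp
    linarith
  rw [hder.deriv] at key
  calc ‖fderiv ℂ Q x v‖ ≤ M / ρ := key
    _ = M / δ * ‖v‖ := by rw [hρ]; field_simp

variable {E : Type*} [NormedAddCommGroup E] [NormedSpace ℂ E]

lemma homog_zero {Q : E → ℂ} {n : ℕ} (hn : n ≠ 0)
    (hom : ∀ (l : ℂ) (z : E), Q (l • z) = l ^ n * Q z) : Q 0 = 0 := by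
  have := hom 0 0
  simpa [zero_pow hn] using this

lemma homog_norm_bound {Q : E → ℂ} {n : ℕ} (hn : n ≠ 0)
    (hom : ∀ (l : ℂ) (z : E), Q (l • z) = l ^ n * Q z)
    (hsph : ∀ ζ ∈ sphere (0 : E) 1, ‖Q ζ‖ ≤ 1) (z : E) : ‖Q z‖ ≤ ‖z‖ ^ n := by
  rcases eq_or_ne z 0 with hz | hz
  · simp [hz, homog_zero hn hom, zero_pow hn]
  · have hzn : 0 < ‖z‖ := norm_pos_iff.mpr hz
    have hzC : ((‖z‖ : ℂ)) ≠ 0 := by exact_mod_cast hzn.ne'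
    set u : E := ((‖z‖ : ℂ))⁻¹ • z with hu
    have hun : u ∈ sphere (0 : E) 1 := by
      rw [mem_sphere_zero_iff_norm, hu, norm_smul, norm_inv]
      rw [Complex.norm_real, Real.norm_eq_abs, abs_of_pos hzn, inv_mul_cancel₀ hzn.ne']
    have hzu : ((‖z‖ : ℂ)) • u = z := by
      rw [hu]; exact smul_inv_smul₀ hzC z
    calc ‖Q z‖ = ‖Q (((‖z‖ : ℂ)) • u)‖ := by rw [hzu]
      _ = ‖(‖z‖ : ℂ)^n‖ * ‖Q u‖ := by rw [hom]; exact norm_mul _ _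
      _ ≤ ‖z‖^n * 1 := by
          apply mul_le_mul _ (hsph u hun) (norm_nonneg _) (by positivity)
          rw [norm_pow, Complex.norm_real, Real.norm_eq_abs, abs_of_pos hzn]
      _ = ‖z‖ ^ n := mul_one _

lemma homog_euler {Q : E → ℂ} {n : ℕ} (hQ : Differentiable ℂ Q)
    (hom : ∀ (l : ℂ) (z : E), Q (l • z) = l ^ n * Q z) (z : E) :
    fderiv ℂ Q z z = n * Q z := by
  have h1 : HasDerivAt (fun l : ℂ => Q (l • z)) (fderiv ℂ Q z z) 1 := by
    have hl : HasDerivAt (fun l : ℂ => l • z) z 1 := by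
      simpa using (hasDerivAt_id (1:ℂ)).smul_const z
    have := (hQ ((1:ℂ) • z)).hasFDerivAt.comp_hasDerivAt 1 hl
    rw [one_smul] at this; exact this
  have h2 : HasDerivAt (fun l : ℂ => l ^ n * Q z) ((n : ℂ) * Q z) 1 := by
    have := (hasDerivAt_pow n (1:ℂ)).mul_const (Q z)
    simpa using this
  have hfe : (fun l : ℂ => Q (l • z)) = fun l : ℂ => l ^ n * Q z := funext fun l => hom l z
  rw [hfe] at h1
  exact h1.unique h2

-- assume aux_sq from t1 (copy)
lemma gauss_sum (n : ℕ) : (∑ i ∈ Finset.range n, ((i:ℝ)+1)) = (n*(n+1))/2 := by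
  induction n with
  | zero => simp
  | succ m ih => rw [Finset.sum_range_succ, ih]; push_cast; ring

lemma aux_sq {r : ℝ} (h0 : 0 ≤ r) (h1 : r < 1) (n : ℕ) :
    (n:ℝ)^2 * r^n ≤ 2 / (1-r)^2 := by
  have hs : 0 < 1 - r := by linarith
  rcases Nat.eq_zero_or_pos n with hn | hn
  · subst hn; norm_num; positivity
  have hsum : HasSum (fun i : ℕ => ((i:ℝ)+1) * r^i) (1/(1-r)^2) := by
    have hr : ‖r‖ < 1 := by rw [Real.norm_eq_abs, abs_lt]; constructor <;> linarith
    have h1' := hasSum_coe_mul_geometric_of_norm_lt_one hr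
    have h2' := hasSum_geometric_of_norm_lt_one hr
    have heq : r / (1-r)^2 + (1-r)⁻¹ = 1/(1-r)^2 := by field_simp; ring
    have := h1'.add h2'
    rw [heq] at this
    have hfe : (fun i : ℕ => ((i:ℝ)+1) * r^i) = fun b : ℕ => (b:ℝ) * r^b + r^b := by
      funext i; ring
    rw [hfe]; exact this
  have hle : ∑ i ∈ Finset.range n, ((i:ℝ)+1) * r^i ≤ 1/(1-r)^2 :=
    sum_le_hasSum _ (fun i _ => by positivity) hsum
  have hlow : ((n:ℝ)^2/2) * r^n ≤ ∑ i ∈ Finset.range n, ((i:ℝ)+1) * r^i := by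
    have hstep : ∑ i ∈ Finset.range n, ((i:ℝ)+1) * r^(n-1)
        ≤ ∑ i ∈ Finset.range n, ((i:ℝ)+1) * r^i := by
      apply Finset.sum_le_sum
      intro i hi
      have hi' : i ≤ n - 1 := by have := Finset.mem_range.mp hi; omega
      have : r ^ (n-1) ≤ r ^ i := pow_le_pow_of_le_one h0 h1.le hi'
      nlinarith [Nat.cast_nonneg (α := ℝ) i]
    refine le_trans ?_ hstep
    rw [← Finset.sum_mul, gauss_sum]
    have hrn : r^n ≤ r^(n-1) := pow_le_pow_of_le_one h0 h1.le (by omega)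
    nlinarith [pow_nonneg h0 (n-1), pow_nonneg h0 n, Nat.cast_nonneg (α := ℝ) n]
  calc (n:ℝ)^2 * r^n = 2 * (((n:ℝ)^2/2) * r^n) := by ring
    _ ≤ 2 * (1/(1-r)^2) := by nlinarith
    _ = 2/(1-r)^2 := by ring

-- 2^k r^(2^k) ≤ (2/s²) (1/2)^k  where s = 1-r
lemma aux_gap {r : ℝ} (h0 : 0 ≤ r) (h1 : r < 1) (k : ℕ) :
    (2:ℝ)^k * r^(2^k) ≤ 2/(1-r)^2 * (2:ℝ)⁻¹^k := by
  have ha : (0:ℝ) < (2:ℝ)^k := by positivity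
  have h := aux_sq h0 h1 (2^k)
  have hcast : ((2^k : ℕ) : ℝ) = (2:ℝ)^k := by push_cast; ring
  rw [hcast] at h
  rw [inv_pow]
  calc (2:ℝ)^k * r^(2^k) = (((2:ℝ)^k)^2 * r^(2^k)) * ((2:ℝ)^k)⁻¹ := by
        field_simp
    _ ≤ 2/(1-r)^2 * ((2:ℝ)^k)⁻¹ :=
        mul_le_mul_of_nonneg_right h (by positivity)

set_option maxHeartbeats 1000000 in
lemma key_sum_est (ω : ℝ → ℝ)
    (hωpos : ∀ t ∈ Set.Ioc (0:ℝ) 1, 0 < ω t)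
    (hωmono : MonotoneOn ω (Set.Ioc (0:ℝ) 1))
    {ε : ℝ} (hε : 0 < ε)
    (hanti : AntitoneOn (fun t : ℝ => ω t / t ^ ((1:ℝ) - ε)) (Set.Ioc (0:ℝ) 1))
    {r : ℝ} (h0 : 0 ≤ r) (h1 : r < 1) :
    ∑' k : ℕ, ω ((2:ℝ)⁻¹ ^ k) * (2:ℝ)^k * r ^ (2^k) ≤
      ((2:ℝ) ^ ε / ((2:ℝ) ^ ε - 1) + 4) * (ω (1-r) / (1-r)) := by
  set s : ℝ := 1 - r with hsdef
  have hs0 : 0 < s := by simp [hsdef]; linarith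
  have hs1 : s ≤ 1 := by simp [hsdef]; linarith
  have hsIoc : s ∈ Set.Ioc (0:ℝ) 1 := ⟨hs0, hs1⟩
  have hωs : 0 < ω s := hωpos s hsIoc
  set q : ℝ := (2:ℝ) ^ ε with hqdef
  have hq1 : 1 < q := by
    rw [hqdef]
    exact Real.one_lt_rpow_iff_of_pos (by norm_num) |>.mpr (Or.inl ⟨one_lt_two, hε⟩)
  have hq0 : 0 < q - 1 := by linarith
  -- membership facts
  have hmem : ∀ k : ℕ, (2:ℝ)⁻¹ ^ k ∈ Set.Ioc (0:ℝ) 1 := fun k =>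
    ⟨by positivity, pow_le_one₀ (by norm_num) (by norm_num)⟩
  -- choose N
  obtain ⟨N, hNle, hNlt⟩ : ∃ N : ℕ, s ≤ (2:ℝ)⁻¹ ^ N ∧ (2:ℝ)⁻¹ ^ (N+1) < s := by
    set n : ℕ := ⌊1/s⌋₊ with hn
    have h1s : 1 ≤ 1/s := by rw [le_div_iff₀ hs0]; linarith
    have hn1 : 1 ≤ n := Nat.le_floor (by exact_mod_cast h1s)
    refine ⟨Nat.log 2 n, ?_, ?_⟩
    · have h2N : ((2:ℕ)^(Nat.log 2 n) : ℝ) ≤ n := by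
        exact_mod_cast Nat.pow_log_le_self 2 (by omega)
      have hfl : (n : ℝ) ≤ 1/s := Nat.floor_le (by positivity)
      have : (2:ℝ)^(Nat.log 2 n) ≤ 1/s := by
        refine le_trans ?_ hfl
        exact_mod_cast h2N
      rw [inv_pow]
      rw [le_inv_comm₀ hs0 (by positivity)]
      rw [le_div_iff₀ hs0] at this
      calc (2:ℝ)^(Nat.log 2 n) ≤ 1/s := by rw [le_div_iff₀ hs0]; linarith
        _ = s⁻¹ := one_div s
    · have h2N : (n:ℝ) < (2:ℝ)^(Nat.log 2 n + 1) := by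
        exact_mod_cast Nat.lt_pow_succ_log_self (by norm_num) n
      have hfl : 1/s < (n:ℝ) + 1 := Nat.lt_floor_add_one _
      have h2N' : 1/s < (2:ℝ)^(Nat.log 2 n + 1) := by
        have : (n:ℝ) + 1 ≤ (2:ℝ)^(Nat.log 2 n + 1) := by
          have : n + 1 ≤ 2^(Nat.log 2 n + 1) := by
            have := Nat.lt_pow_succ_log_self (b := 2) (by norm_num) n
            omega
          exact_mod_cast this
        linarith
      rw [div_lt_iff₀ hs0] at h2N'
      have hp : (0:ℝ) < (2:ℝ) ^ (Nat.log 2 n + 1) := by positivity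
      rw [inv_pow, inv_lt_iff_one_lt_mul₀ hp]
      linarith [mul_comm s ((2:ℝ) ^ (Nat.log 2 n + 1))]
  -- termwise bound and summability
  set T : ℕ → ℝ := fun k => ω ((2:ℝ)⁻¹ ^ k) * (2:ℝ)^k * r ^ (2^k) with hTdef
  have hT0 : ∀ k : ℕ, 0 ≤ T k := fun k => by
    have := (hωpos _ (hmem k)).le
    show (0:ℝ) ≤ ω ((2:ℝ)⁻¹ ^ k) * (2:ℝ)^k * r ^ (2^k)
    positivity
  have h1mem : (1:ℝ) ∈ Set.Ioc (0:ℝ) 1 := by norm_num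
  have hTle : ∀ k : ℕ, T k ≤ (ω 1 * (2/s^2)) * (2:ℝ)⁻¹^k := by
    intro k
    show ω ((2:ℝ)⁻¹ ^ k) * (2:ℝ)^k * r ^ (2^k) ≤ _
    have h1' : ω ((2:ℝ)⁻¹ ^ k) ≤ ω 1 := hωmono (hmem k) h1mem (hmem k).2
    have h2' := aux_gap h0 h1 k
    rw [← hsdef] at h2'
    have hωk := (hωpos _ (hmem k)).le
    calc ω ((2:ℝ)⁻¹^k) * (2:ℝ)^k * r^(2^k)
        = ω ((2:ℝ)⁻¹^k) * ((2:ℝ)^k * r^(2^k)) := by ring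
      _ ≤ ω 1 * ((2:ℝ)^k * r^(2^k)) := by
          apply mul_le_mul_of_nonneg_right h1' (by positivity)
      _ ≤ ω 1 * (2/s^2 * (2:ℝ)⁻¹^k) :=
          mul_le_mul_of_nonneg_left h2' (le_trans hωk h1')
      _ = (ω 1 * (2/s^2)) * (2:ℝ)⁻¹^k := by ring
  have hgeo : Summable (fun k : ℕ => (ω 1 * (2/s^2)) * (2:ℝ)⁻¹^k) :=
    (summable_geometric_of_lt_one (by norm_num) (by norm_num)).mul_left _
  have hTsum : Summable T := Summable.of_nonneg_of_le hT0 hTle hgeo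
  rw [← Summable.sum_add_tsum_nat_add (N+1) hTsum]
  -- head estimate
  have hhead : ∑ k ∈ Finset.range (N+1), T k ≤ (q/(q-1)) * (ω s / s) := by
    have hterm : ∀ k ∈ Finset.range (N+1),
        T k ≤ (ω s / s ^ ((1:ℝ)-ε)) * q^k := by
      intro k hk
      show ω ((2:ℝ)⁻¹ ^ k) * (2:ℝ)^k * r ^ (2^k) ≤ _
      have hkN : k ≤ N := by have := Finset.mem_range.mp hk; omega
      have hts : s ≤ (2:ℝ)⁻¹^k :=
        le_trans hNle (pow_le_pow_of_le_one (by norm_num) (by norm_num) hkN)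
      have hantik := hanti hsIoc (hmem k) hts
      simp only at hantik
      have htpos : (0:ℝ) < ((2:ℝ)⁻¹^k) ^ ((1:ℝ)-ε) :=
        Real.rpow_pos_of_pos (hmem k).1 _
      have hωt : ω ((2:ℝ)⁻¹^k) ≤ (ω s / s ^ ((1:ℝ)-ε)) * ((2:ℝ)⁻¹^k) ^ ((1:ℝ)-ε) := by
        rw [← div_le_iff₀ htpos]
        exact hantik
      have hqk : ((2:ℝ)⁻¹^k) ^ ((1:ℝ)-ε) * (2:ℝ)^k = q^k := by
        have hT2 : ((2:ℝ)⁻¹)^k = (2:ℝ) ^ (-(k:ℝ)) := by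
          rw [Real.rpow_neg (by norm_num), Real.rpow_natCast, inv_pow]
        rw [hT2, ← Real.rpow_natCast (2:ℝ) k, ← Real.rpow_natCast q k, hqdef,
          ← Real.rpow_mul (by norm_num), ← Real.rpow_add (by norm_num),
          ← Real.rpow_mul (by norm_num)]
        congr 1
        ring
      have hrle : r ^ (2^k) ≤ 1 := pow_le_one₀ h0 h1.le
      have hωtpos := (hωpos _ (hmem k)).le
      calc ω ((2:ℝ)⁻¹^k) * (2:ℝ)^k * r^(2^k)
          ≤ ω ((2:ℝ)⁻¹^k) * (2:ℝ)^k * 1 := by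
            apply mul_le_mul_of_nonneg_left hrle (by positivity)
        _ = ω ((2:ℝ)⁻¹^k) * (2:ℝ)^k := mul_one _
        _ ≤ ((ω s / s ^ ((1:ℝ)-ε)) * ((2:ℝ)⁻¹^k) ^ ((1:ℝ)-ε)) * (2:ℝ)^k := by
            apply mul_le_mul_of_nonneg_right hωt (by positivity)
        _ = (ω s / s ^ ((1:ℝ)-ε)) * (((2:ℝ)⁻¹^k) ^ ((1:ℝ)-ε) * (2:ℝ)^k) := by ring
        _ = (ω s / s ^ ((1:ℝ)-ε)) * q^k := by rw [hqk]
    have hq2 : q^(N+1) ≤ (2:ℝ)^ε / s^ε := by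
      have h2Ns : (2:ℝ)^(N+1) ≤ 2/s := by
        have hx : s * (2:ℝ)^N ≤ 1 := by
          have := mul_le_mul_of_nonneg_right hNle (le_of_lt (pow_pos (show (0:ℝ) < 2 by norm_num) N))
          rwa [← mul_pow, inv_mul_cancel₀ (two_ne_zero), one_pow] at this
        rw [le_div_iff₀ hs0, pow_succ]
        nlinarith [pow_pos (show (0:ℝ) < 2 by norm_num) N]
      calc q^(N+1) = ((2:ℝ)^(N+1) : ℝ) ^ ε := by
            rw [hqdef, ← Real.rpow_natCast ((2:ℝ)^ε) (N+1), ← Real.rpow_natCast (2:ℝ) (N+1),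
              ← Real.rpow_mul (by norm_num), ← Real.rpow_mul (by norm_num)]
            congr 1
            ring
        _ ≤ ((2:ℝ)/s) ^ ε := Real.rpow_le_rpow (by positivity) h2Ns hε.le
        _ = (2:ℝ)^ε / s^ε := Real.div_rpow (by norm_num) hs0.le ε
    have hA : (0:ℝ) < s ^ ((1:ℝ)-ε) := Real.rpow_pos_of_pos hs0 _
    have hB : (0:ℝ) < s ^ ε := Real.rpow_pos_of_pos hs0 _
    have hAB : s ^ ((1:ℝ)-ε) * s ^ ε = s := by
      rw [← Real.rpow_add hs0]; norm_num
    calc ∑ k ∈ Finset.range (N+1), T k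
        ≤ ∑ k ∈ Finset.range (N+1), (ω s / s ^ ((1:ℝ)-ε)) * q^k := Finset.sum_le_sum hterm
      _ = (ω s / s ^ ((1:ℝ)-ε)) * ((q^(N+1) - 1)/(q-1)) := by
          rw [← Finset.mul_sum, geom_sum_eq (by linarith : q ≠ 1)]
      _ ≤ (ω s / s ^ ((1:ℝ)-ε)) * (((2:ℝ)^ε / s^ε)/(q-1)) := by
          have h9 : (q^(N+1) - 1)/(q-1) ≤ ((2:ℝ)^ε / s^ε)/(q-1) := by
            gcongr
            linarith [hq2]
          apply mul_le_mul_of_nonneg_left h9 (by positivity)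
      _ = (q/(q-1)) * (ω s / s) := by
          have hkey : ω s / s ^ ((1:ℝ)-ε) * (((2:ℝ)^ε / s^ε)/(q-1))
              = (2:ℝ)^ε/(q-1) * (ω s/(s ^ ((1:ℝ)-ε) * s^ε)) := by
            field_simp
          rw [hkey, hAB, hqdef]
  -- tail estimate
  have hshift : Summable (fun i : ℕ => T (i+(N+1))) :=
    (summable_nat_add_iff (N+1)).2 hTsum
  have hgeoshift : Summable (fun i : ℕ => (ω s * (2/s^2)) * (2:ℝ)⁻¹^(i+(N+1))) := by
    have : ∀ i : ℕ, (ω s * (2/s^2)) * (2:ℝ)⁻¹^(i+(N+1))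
        = ((ω s * (2/s^2)) * (2:ℝ)⁻¹^(N+1)) * (2:ℝ)⁻¹^i := fun i => by
      rw [pow_add]; ring
    rw [funext this]
    exact (summable_geometric_of_lt_one (by norm_num) (by norm_num)).mul_left _
  have htail : (∑' i : ℕ, T (i+(N+1))) ≤ 4 * (ω s / s) := by
    have hterm : ∀ i : ℕ, T (i+(N+1)) ≤ (ω s * (2/s^2)) * (2:ℝ)⁻¹^(i+(N+1)) := by
      intro i
      show ω ((2:ℝ)⁻¹ ^ (i+(N+1))) * (2:ℝ)^(i+(N+1)) * r ^ (2^(i+(N+1))) ≤ _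
      have hkle : (2:ℝ)⁻¹^(i+(N+1)) ≤ s :=
        le_of_lt (lt_of_le_of_lt
          (pow_le_pow_of_le_one (by norm_num) (by norm_num) (by omega)) hNlt)
      have hωk : ω ((2:ℝ)⁻¹^(i+(N+1))) ≤ ω s := hωmono (hmem _) hsIoc hkle
      have h2' := aux_gap h0 h1 (i+(N+1))
      rw [← hsdef] at h2'
      have hωtpos := (hωpos _ (hmem (i+(N+1)))).le
      calc ω ((2:ℝ)⁻¹^(i+(N+1))) * (2:ℝ)^(i+(N+1)) * r^(2^(i+(N+1)))
          = ω ((2:ℝ)⁻¹^(i+(N+1))) * ((2:ℝ)^(i+(N+1)) * r^(2^(i+(N+1)))) := by ring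
        _ ≤ ω s * ((2:ℝ)^(i+(N+1)) * r^(2^(i+(N+1)))) := by
            apply mul_le_mul_of_nonneg_right hωk (by positivity)
        _ ≤ ω s * (2/s^2 * (2:ℝ)⁻¹^(i+(N+1))) :=
            mul_le_mul_of_nonneg_left h2' hωs.le
        _ = (ω s * (2/s^2)) * (2:ℝ)⁻¹^(i+(N+1)) := by ring
    calc (∑' i : ℕ, T (i+(N+1)))
        ≤ ∑' i : ℕ, (ω s * (2/s^2)) * (2:ℝ)⁻¹^(i+(N+1)) :=
          Summable.tsum_le_tsum hterm hshift hgeoshift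
      _ = ((ω s * (2/s^2)) * (2:ℝ)⁻¹^(N+1)) * (1 - 2⁻¹)⁻¹ := by
          have hre : ∀ i : ℕ, (ω s * (2/s^2)) * (2:ℝ)⁻¹^(i+(N+1))
              = ((ω s * (2/s^2)) * (2:ℝ)⁻¹^(N+1)) * (2:ℝ)⁻¹^i := fun i => by
            rw [pow_add]; ring
          rw [tsum_congr hre, tsum_mul_left,
            tsum_geometric_of_lt_one (by norm_num) (by norm_num)]
      _ ≤ ((ω s * (2/s^2)) * s) * (1 - 2⁻¹)⁻¹ := by
          apply mul_le_mul_of_nonneg_right _ (by norm_num)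
          apply mul_le_mul_of_nonneg_left hNlt.le (by positivity)
      _ = 4 * (ω s / s) := by
          field_simp
          ring
  have hexp : (q/(q-1) + 4) * (ω s / s) = (q/(q-1)) * (ω s / s) + 4 * (ω s / s) := by ring
  rw [hexp]
  exact add_le_add hhead htail

lemma gap_summable_s17 (ω : ℝ → ℝ)
    (hωpos : ∀ t ∈ Set.Ioc (0:ℝ) 1, 0 < ω t)
    (hωmono : MonotoneOn ω (Set.Ioc (0:ℝ) 1))
    {r : ℝ} (h0 : 0 ≤ r) (h1 : r < 1) :
    Summable (fun k : ℕ => ω ((2:ℝ)⁻¹ ^ k) * (2:ℝ)^k * r ^ (2^k)) := by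
  have hs0 : (0:ℝ) < 1 - r := by linarith
  have hmem : ∀ k : ℕ, (2:ℝ)⁻¹ ^ k ∈ Set.Ioc (0:ℝ) 1 := fun k =>
    ⟨by positivity, pow_le_one₀ (by norm_num) (by norm_num)⟩
  have h1mem : (1:ℝ) ∈ Set.Ioc (0:ℝ) 1 := by norm_num
  refine Summable.of_nonneg_of_le
    (fun k => by have := (hωpos _ (hmem k)).le; positivity)
    (fun k => ?_)
    ((summable_geometric_of_lt_one (r := (2:ℝ)⁻¹) (by norm_num) (by norm_num)).mul_left
      (ω 1 * (2/(1-r)^2)))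
  have h1' : ω ((2:ℝ)⁻¹ ^ k) ≤ ω 1 := hωmono (hmem k) h1mem (hmem k).2
  have h2' := aux_gap h0 h1 k
  have hωk := (hωpos _ (hmem k)).le
  calc ω ((2:ℝ)⁻¹^k) * (2:ℝ)^k * r^(2^k)
      = ω ((2:ℝ)⁻¹^k) * ((2:ℝ)^k * r^(2^k)) := by ring
    _ ≤ ω 1 * ((2:ℝ)^k * r^(2^k)) := by
        apply mul_le_mul_of_nonneg_right h1' (by positivity)
    _ ≤ ω 1 * (2/(1-r)^2 * (2:ℝ)⁻¹^k) :=
        mul_le_mul_of_nonneg_left h2' (le_trans hωk h1')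
    _ = (ω 1 * (2/(1-r)^2)) * (2:ℝ)⁻¹^k := by ring

end Aux

/-- uniform `B^ω`-bound for gap series of homogeneous polynomials of degrees
`2^k` with coefficients `η_k ω(2^{-k})`, `|η_k| ≤ 1`. -/
theorem stmt17 (d : ℕ) (hd : 1 ≤ d) (ω : ℝ → ℝ)
    (hωpos : ∀ t ∈ Set.Ioc (0 : ℝ) 1, 0 < ω t)
    (hωmono : MonotoneOn ω (Set.Ioc (0 : ℝ) 1))
    (hωreg : ∃ ε : ℝ, 0 < ε ∧
      AntitoneOn (fun t : ℝ => ω t / t ^ ((1 : ℝ) - ε)) (Set.Ioc (0 : ℝ) 1)) :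
    ∃ C : ℝ, 0 < C ∧
      ∀ (P : ℕ → EuclideanSpace ℂ (Fin d) → ℂ) (η : ℕ → ℂ),
        (∀ k : ℕ, Differentiable ℂ (P k)) →
        (∀ (k : ℕ) (l : ℂ) (z : EuclideanSpace ℂ (Fin d)), P k (l • z) = l ^ (2 ^ k) * P k z) →
        (∀ k : ℕ, ∀ ζ ∈ sphere (0 : EuclideanSpace ℂ (Fin d)) 1, ‖P k ζ‖ ≤ 1) →
        (∀ k : ℕ, ‖η k‖ ≤ 1) →
        ∀ f : EuclideanSpace ℂ (Fin d) → ℂ,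
          (f = fun z => ∑' k : ℕ, η k * (ω ((2 : ℝ)⁻¹ ^ k) : ℂ) * P k z) →
          TendstoLocallyUniformlyOn
            (fun (n : ℕ) z => ∑ k ∈ Finset.range n, η k * (ω ((2 : ℝ)⁻¹ ^ k) : ℂ) * P k z)
            f atTop (ball 0 1) ∧
          DifferentiableOn ℂ f (ball 0 1) ∧
          ∀ z ∈ ball (0 : EuclideanSpace ℂ (Fin d)) 1,
            ‖f 0‖ + ‖radDeriv f z‖ * (1 - ‖z‖) / ω (1 - ‖z‖) ≤ C := by
  obtain ⟨ε, hε, hanti⟩ := hωreg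
  have hq1 : 1 < (2:ℝ)^ε :=
    (Real.one_lt_rpow_iff_of_pos (by norm_num)).mpr (Or.inl ⟨one_lt_two, hε⟩)
  have hCpos : 0 < (2:ℝ)^ε / ((2:ℝ)^ε - 1) + 4 := by
    have h1 : 0 < (2:ℝ)^ε / ((2:ℝ)^ε - 1) := div_pos (by linarith) (by linarith)
    linarith
  refine ⟨(2:ℝ)^ε / ((2:ℝ)^ε - 1) + 4, hCpos, ?_⟩
  intro P η hdiff hom hsph hη f hf
  have hmem : ∀ k : ℕ, (2:ℝ)⁻¹ ^ k ∈ Set.Ioc (0:ℝ) 1 := fun k =>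
    ⟨by positivity, pow_le_one₀ (by norm_num) (by norm_num)⟩
  have h1mem : (1:ℝ) ∈ Set.Ioc (0:ℝ) 1 := by norm_num
  have hω1 : 0 < ω 1 := hωpos 1 h1mem
  have hωk_pos : ∀ k : ℕ, 0 < ω ((2:ℝ)⁻¹^k) := fun k => hωpos _ (hmem k)
  have hωk_le : ∀ k : ℕ, ω ((2:ℝ)⁻¹^k) ≤ ω 1 := fun k => hωmono (hmem k) h1mem (hmem k).2
  have hPb : ∀ (k : ℕ) (x : EuclideanSpace ℂ (Fin d)), ‖P k x‖ ≤ ‖x‖^(2^k) :=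
    fun k => homog_norm_bound (by positivity) (hom k) (hsph k)
  have hP0 : ∀ k : ℕ, P k 0 = 0 := fun k => homog_zero (by positivity) (hom k)
  have hcoef : ∀ k : ℕ, ‖η k * ((ω ((2:ℝ)⁻¹^k) : ℝ) : ℂ)‖ ≤ ω 1 := by
    intro k
    rw [norm_mul, Complex.norm_real, Real.norm_eq_abs, abs_of_pos (hωk_pos k)]
    calc ‖η k‖ * ω ((2:ℝ)⁻¹^k) ≤ 1 * ω 1 :=
          mul_le_mul (hη k) (hωk_le k) (hωk_pos k).le zero_le_one
      _ = ω 1 := one_mul _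
  have hcoefk : ∀ k : ℕ, ‖η k * ((ω ((2:ℝ)⁻¹^k) : ℝ) : ℂ)‖ ≤ ω ((2:ℝ)⁻¹^k) := by
    intro k
    rw [norm_mul, Complex.norm_real, Real.norm_eq_abs, abs_of_pos (hωk_pos k)]
    calc ‖η k‖ * ω ((2:ℝ)⁻¹^k) ≤ 1 * ω ((2:ℝ)⁻¹^k) :=
          mul_le_mul_of_nonneg_right (hη k) (hωk_pos k).le
      _ = ω ((2:ℝ)⁻¹^k) := one_mul _
  have hsum0 : Summable (fun k : ℕ => η k * ((ω ((2:ℝ)⁻¹^k) : ℝ) : ℂ) * P k 0) := by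
    have hz : (fun k : ℕ => η k * ((ω ((2:ℝ)⁻¹^k) : ℝ) : ℂ) * P k 0) = fun _ => (0:ℂ) := by
      funext k; rw [hP0 k, mul_zero]
    rw [hz]; exact summable_zero
  -- key derivative fact
  have hkey : ∀ z ∈ ball (0 : EuclideanSpace ℂ (Fin d)) 1,
      HasFDerivAt f
        (∑' k : ℕ, (η k * ((ω ((2:ℝ)⁻¹^k) : ℝ) : ℂ)) • fderiv ℂ (P k) z) z ∧
      Summable (fun k : ℕ => (η k * ((ω ((2:ℝ)⁻¹^k) : ℝ) : ℂ)) • fderiv ℂ (P k) z) := by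
    intro z hz
    rw [mem_ball_zero_iff] at hz
    have hz0 := norm_nonneg z
    set R : ℝ := (1 + ‖z‖)/2 with hR
    have hR1 : R < 1 := by rw [hR]; linarith
    have hRz : ‖z‖ < R := by rw [hR]; linarith
    have hR0 : 0 < R := by rw [hR]; linarith
    set R' : ℝ := (1 + R)/2 with hR'
    have hR'1 : R' < 1 := by rw [hR']; linarith
    have hR'0 : 0 < R' := by rw [hR']; linarith
    have h1R : (0:ℝ) < 1 - R := by linarith
    set u : ℕ → ℝ := fun k => ω 1 * (R'^(2^k) * (2/(1-R))) with hu
    have husum : Summable u := by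
      apply Summable.of_nonneg_of_le (fun k => by positivity) (fun k => ?_)
        ((summable_geometric_of_lt_one hR'0.le hR'1).mul_left (ω 1 * (2/(1-R))))
      show ω 1 * (R'^(2^k) * (2/(1-R))) ≤ (ω 1 * (2/(1-R))) * R'^k
      have hpw : R'^(2^k) ≤ R'^k :=
        pow_le_pow_of_le_one hR'0.le hR'1.le (Nat.le_of_lt (Nat.lt_two_pow_self (n := k)))
      calc ω 1 * (R'^(2^k) * (2/(1-R))) ≤ ω 1 * (R'^k * (2/(1-R))) := by
            apply mul_le_mul_of_nonneg_left _ hω1.le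
            apply mul_le_mul_of_nonneg_right hpw (by positivity)
        _ = (ω 1 * (2/(1-R))) * R'^k := by ring
    have hfd : ∀ (k : ℕ) (x : EuclideanSpace ℂ (Fin d)), x ∈ ball (0:EuclideanSpace ℂ (Fin d)) R →
        HasFDerivAt (fun y => η k * ((ω ((2:ℝ)⁻¹^k) : ℝ) : ℂ) * P k y)
          ((η k * ((ω ((2:ℝ)⁻¹^k) : ℝ) : ℂ)) • fderiv ℂ (P k) x) x :=
      fun k x _ => ((hdiff k) x).hasFDerivAt.const_mul _
    have hbd : ∀ (k : ℕ) (x : EuclideanSpace ℂ (Fin d)), x ∈ ball (0:EuclideanSpace ℂ (Fin d)) R →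
        ‖(η k * ((ω ((2:ℝ)⁻¹^k) : ℝ) : ℂ)) • fderiv ℂ (P k) x‖ ≤ u k := by
      intro k x hx
      rw [mem_ball_zero_iff] at hx
      rw [norm_smul]
      have hδ : (0:ℝ) < (1-R)/2 := by linarith
      have hfb : ‖fderiv ℂ (P k) x‖ ≤ R'^(2^k) / ((1-R)/2) := by
        apply fderiv_bound (hdiff k) hδ (by positivity)
        intro y hy
        have hyR' : ‖y‖ ≤ R' := by rw [hR']; linarith
        calc ‖P k y‖ ≤ ‖y‖^(2^k) := hPb k y
          _ ≤ R'^(2^k) := pow_le_pow_left₀ (norm_nonneg y) hyR' _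
      have hdiv : R'^(2^k) / ((1-R)/2) = R'^(2^k) * (2/(1-R)) := by
        field_simp
      rw [hdiv] at hfb
      calc ‖η k * ((ω ((2:ℝ)⁻¹^k) : ℝ) : ℂ)‖ * ‖fderiv ℂ (P k) x‖
          ≤ ω 1 * (R'^(2^k) * (2/(1-R))) :=
            mul_le_mul (hcoef k) hfb (norm_nonneg _) hω1.le
        _ = u k := by rw [hu]
    have hsum' : Summable (fun k : ℕ => (η k * ((ω ((2:ℝ)⁻¹^k) : ℝ) : ℂ)) • fderiv ℂ (P k) z) := by
      apply Summable.of_norm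
      exact Summable.of_nonneg_of_le (fun k => norm_nonneg _)
        (fun k => hbd k z (mem_ball_zero_iff.mpr hRz)) husum
    have hHF := hasFDerivAt_tsum_of_isPreconnected husum isOpen_ball
      (convex_ball _ _).isPreconnected hfd hbd (mem_ball_self hR0) hsum0
      (mem_ball_zero_iff.mpr hRz)
    rw [← hf] at hHF
    exact ⟨hHF, hsum'⟩
  refine ⟨?_, ?_, ?_⟩
  · -- locally uniform convergence
    rw [tendstoLocallyUniformlyOn_iff_forall_isCompact isOpen_ball]
    intro K hK hKc
    rcases K.eq_empty_or_nonempty with hKe | hKne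
    · rw [hKe]; simp [tendstoUniformlyOn_iff]
    obtain ⟨x0, hx0K, hmax⟩ := hKc.exists_isMaxOn hKne continuous_norm.continuousOn
    have hR1 : ‖x0‖ < 1 := mem_ball_zero_iff.mp (hK hx0K)
    have hR0 : (0:ℝ) ≤ ‖x0‖ := norm_nonneg _
    have husum : Summable (fun k : ℕ => ω 1 * ‖x0‖^k) :=
      (summable_geometric_of_lt_one hR0 hR1).mul_left _
    rw [hf]
    apply tendstoUniformlyOn_tsum_nat husum
    intro k x hx
    have hxR : ‖x‖ ≤ ‖x0‖ := hmax hx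
    calc ‖η k * ((ω ((2:ℝ)⁻¹^k) : ℝ) : ℂ) * P k x‖
        = ‖η k * ((ω ((2:ℝ)⁻¹^k) : ℝ) : ℂ)‖ * ‖P k x‖ := norm_mul _ _
      _ ≤ ω 1 * ‖x‖^(2^k) :=
          mul_le_mul (hcoef k) (hPb k x) (norm_nonneg _) hω1.le
      _ ≤ ω 1 * ‖x0‖^(2^k) :=
          mul_le_mul_of_nonneg_left (pow_le_pow_left₀ (norm_nonneg x) hxR _) hω1.le
      _ ≤ ω 1 * ‖x0‖^k :=
          mul_le_mul_of_nonneg_left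
            (pow_le_pow_of_le_one hR0 hR1.le (Nat.le_of_lt (Nat.lt_two_pow_self (n := k)))) hω1.le
  · -- differentiability
    intro z hz
    exact ((hkey z hz).1.differentiableAt).differentiableWithinAt
  · -- norm bound
    intro z hz
    have hz1 : ‖z‖ < 1 := mem_ball_zero_iff.mp hz
    have hz0 : (0:ℝ) ≤ ‖z‖ := norm_nonneg z
    obtain ⟨hHF, hsumA⟩ := hkey z hz
    have hf0 : f 0 = 0 := by
      rw [hf]
      have hzz : (fun k : ℕ => η k * ((ω ((2:ℝ)⁻¹^k) : ℝ) : ℂ) * P k 0) = fun _ => (0:ℂ) := by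
        funext k; rw [hP0 k, mul_zero]
      simp only [hzz, tsum_zero]
    have h1 : radDeriv f z
        = ∑' k : ℕ, ((η k * ((ω ((2:ℝ)⁻¹^k) : ℝ) : ℂ)) • fderiv ℂ (P k) z) z := by
      show fderiv ℂ f z z = _
      rw [hHF.fderiv]
      exact (((ContinuousLinearMap.apply ℂ ℂ z).hasSum hsumA.hasSum).tsum_eq).symm
    have hTsum := gap_summable_s17 ω hωpos hωmono hz0 hz1
    have hterm : ∀ k : ℕ, ‖((η k * ((ω ((2:ℝ)⁻¹^k) : ℝ) : ℂ)) • fderiv ℂ (P k) z) z‖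
        ≤ ω ((2:ℝ)⁻¹^k) * (2:ℝ)^k * ‖z‖^(2^k) := by
      intro k
      have heuler : fderiv ℂ (P k) z z = ((2^k : ℕ) : ℂ) * P k z :=
        homog_euler (hdiff k) (hom k) z
      rw [ContinuousLinearMap.smul_apply, norm_smul, heuler]
      calc ‖η k * ((ω ((2:ℝ)⁻¹^k) : ℝ) : ℂ)‖ * ‖((2^k : ℕ) : ℂ) * P k z‖
          = ‖η k * ((ω ((2:ℝ)⁻¹^k) : ℝ) : ℂ)‖ * ((2:ℝ)^k * ‖P k z‖) := by
            rw [norm_mul]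
            norm_num
        _ ≤ ω ((2:ℝ)⁻¹^k) * ((2:ℝ)^k * ‖z‖^(2^k)) := by
            apply mul_le_mul (hcoefk k) _ (by positivity) (hωk_pos k).le
            apply mul_le_mul_of_nonneg_left (hPb k z) (by positivity)
        _ = ω ((2:ℝ)⁻¹^k) * (2:ℝ)^k * ‖z‖^(2^k) := by ring
    have hnsum : Summable (fun k : ℕ =>
        ‖((η k * ((ω ((2:ℝ)⁻¹^k) : ℝ) : ℂ)) • fderiv ℂ (P k) z) z‖) :=
      Summable.of_nonneg_of_le (fun k => norm_nonneg _) hterm hTsum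
    have hnorm : ‖radDeriv f z‖ ≤ ∑' k : ℕ, ω ((2:ℝ)⁻¹^k) * (2:ℝ)^k * ‖z‖^(2^k) := by
      rw [h1]
      calc ‖∑' k : ℕ, ((η k * ((ω ((2:ℝ)⁻¹^k) : ℝ) : ℂ)) • fderiv ℂ (P k) z) z‖
          ≤ ∑' k : ℕ, ‖((η k * ((ω ((2:ℝ)⁻¹^k) : ℝ) : ℂ)) • fderiv ℂ (P k) z) z‖ :=
            norm_tsum_le_tsum_norm hnsum
        _ ≤ ∑' k : ℕ, ω ((2:ℝ)⁻¹^k) * (2:ℝ)^k * ‖z‖^(2^k) :=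
            Summable.tsum_le_tsum hterm hnsum hTsum
    have hks := key_sum_est ω hωpos hωmono hε hanti hz0 hz1
    have hs0 : (0:ℝ) < 1 - ‖z‖ := by linarith
    have hωs : 0 < ω (1 - ‖z‖) := hωpos _ ⟨hs0, by linarith⟩
    rw [hf0, norm_zero, zero_add]
    have hrd : ‖radDeriv f z‖ ≤ ((2:ℝ)^ε / ((2:ℝ)^ε - 1) + 4) * (ω (1-‖z‖)/(1-‖z‖)) :=
      le_trans hnorm hks
    calc ‖radDeriv f z‖ * (1 - ‖z‖) / ω (1 - ‖z‖)
        ≤ (((2:ℝ)^ε / ((2:ℝ)^ε - 1) + 4) * (ω (1-‖z‖)/(1-‖z‖))) * (1 - ‖z‖) / ω (1 - ‖z‖) := by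
          gcongr
      _ = (2:ℝ)^ε / ((2:ℝ)^ε - 1) + 4 := by
          field_simp
end

section
/- Let ω : (0,1] → (0,∞) be an increasing function, let J ≥ 1, let δ > 0, and suppose that for each k ≥ 0 and 1 ≤ j ≤ J, P_{k,j} : ℂ^d → ℂ is a holomorphic homogeneous polynomial of degree 2^k − 1 such that max_{1≤j≤J} |P_{k,j}(ξ)| ≥ δ for every ξ ∈ S_d. Then there exists a constant C = C(ω) > 0 such that Σ_{k=0}^∞ Σ_{j=1}^J ω²(2^{-k}) |P_{k,j}(z)|² ≥ δ² C · Φ(1−|z|²) for all z ∈ B_d. -/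
open MeasureTheory Metric Set Filter

/-- `exp(-2t) ≤ 1 - t` for `0 ≤ t ≤ 1/2`. -/
lemma aux_exp_le {t : ℝ} (h0 : 0 ≤ t) (h1 : t ≤ 1/2) : Real.exp (-(2*t)) ≤ 1 - t := by
  have h := Real.add_one_le_exp (2*t)
  have he : Real.exp (-(2*t)) * Real.exp (2*t) = 1 := by
    rw [← Real.exp_add]; simp
  nlinarith [Real.exp_pos (-(2*t)), Real.exp_pos (2*t)]

/-- Integrability of `ω(t)²/t` on `Ioc a 1` for `a > 0`, `ω` monotone on `(0,1]`. -/
lemma aux_int (ω : ℝ → ℝ) (hωpos : ∀ t ∈ Set.Ioc (0:ℝ) 1, 0 < ω t)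
    (hωmono : MonotoneOn ω (Set.Ioc (0:ℝ) 1)) {a : ℝ} (ha : 0 < a) :
    IntegrableOn (fun t => ω t ^ 2 / t) (Set.Ioc a 1) := by
  have hsub : Set.Ioc a 1 ⊆ Set.Ioc (0:ℝ) 1 := Set.Ioc_subset_Ioc_left ha.le
  have hm : AEMeasurable ω (volume.restrict (Set.Ioc a 1)) :=
    aemeasurable_restrict_of_monotoneOn measurableSet_Ioc (hωmono.mono hsub)
  have hf : AEMeasurable (fun t => ω t ^ 2 / t) (volume.restrict (Set.Ioc a 1)) :=
    ((hm.pow_const 2).div aemeasurable_id)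
  refine ⟨hf.aestronglyMeasurable, ?_⟩
  apply HasFiniteIntegral.restrict_of_bounded (C := ω 1 ^ 2 / a) measure_Ioc_lt_top
  filter_upwards [self_mem_ae_restrict (measurableSet_Ioc : MeasurableSet (Set.Ioc a 1))]
    with t ht
  have ht01 : t ∈ Set.Ioc (0:ℝ) 1 := hsub ht
  have h1 : 0 < ω t := hωpos t ht01
  have h2 : ω t ≤ ω 1 := hωmono ht01 ⟨one_pos, le_refl 1⟩ ht01.2
  have h3 : 0 < t := ht01.1
  rw [Real.norm_of_nonneg (by positivity)]
  apply div_le_div₀ (by positivity) (by nlinarith) ha (le_of_lt ht.1)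

/-- Bound on one dyadic block. -/
lemma aux_block (ω : ℝ → ℝ) (hωpos : ∀ t ∈ Set.Ioc (0:ℝ) 1, 0 < ω t)
    (hωmono : MonotoneOn ω (Set.Ioc (0:ℝ) 1)) (k : ℕ) :
    ∫ t in Set.Ioc ((2:ℝ)⁻¹^(k+1)) ((2:ℝ)⁻¹^k), ω t ^ 2 / t
      ≤ Real.log 2 * ω ((2:ℝ)⁻¹^k) ^ 2 := by
  set a : ℝ := (2:ℝ)⁻¹^(k+1) with ha
  set b : ℝ := (2:ℝ)⁻¹^k with hb
  have ha0 : 0 < a := by positivity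
  have hb0 : 0 < b := by positivity
  have hab : a ≤ b := by
    rw [ha, hb, pow_succ]
    nlinarith [pow_pos (show (0:ℝ) < 2⁻¹ by norm_num) k]
  have hb1 : b ≤ 1 := by
    rw [hb]; exact pow_le_one₀ (by norm_num) (by norm_num)
  have hbmem : b ∈ Set.Ioc (0:ℝ) 1 := ⟨hb0, hb1⟩
  have hsub : Set.Ioc a b ⊆ Set.Ioc a 1 := Set.Ioc_subset_Ioc_right hb1
  have hint : IntegrableOn (fun t => ω t ^ 2 / t) (Set.Ioc a b) :=
    (aux_int ω hωpos hωmono ha0).mono_set hsub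
  have hcont : ContinuousOn (fun t : ℝ => ω b ^ 2 / t) (Set.Icc a b) := by
    apply continuousOn_const.div continuousOn_id
    intro t ht; exact ne_of_gt (lt_of_lt_of_le ha0 ht.1)
  have hintg : IntegrableOn (fun t => ω b ^ 2 / t) (Set.Ioc a b) :=
    (hcont.integrableOn_Icc).mono_set Set.Ioc_subset_Icc_self
  have hmono : ∫ t in Set.Ioc a b, ω t ^ 2 / t ≤ ∫ t in Set.Ioc a b, ω b ^ 2 / t := by
    apply setIntegral_mono_on hint hintg measurableSet_Ioc
    intro t ht
    have ht01 : t ∈ Set.Ioc (0:ℝ) 1 := ⟨lt_trans ha0 ht.1, le_trans ht.2 hb1⟩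
    have h1 : 0 < ω t := hωpos t ht01
    have h2 : ω t ≤ ω b := hωmono ht01 hbmem ht.2
    exact div_le_div₀ (by positivity) (by nlinarith) ht01.1 le_rfl
  have hcomp : ∫ t in Set.Ioc a b, ω b ^ 2 / t = ω b ^ 2 * Real.log 2 := by
    rw [← intervalIntegral.integral_of_le hab]
    have heq : (fun t : ℝ => ω b ^ 2 / t) = fun t : ℝ => ω b ^ 2 * (1/t) := by
      funext t; ring
    have h0 : (0:ℝ) ∉ Set.uIcc a b := by
      rw [Set.uIcc_of_le hab]
      exact fun h => absurd h.1 (not_le.mpr ha0)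
    calc ∫ t in a..b, ω b ^ 2 / t = ∫ t in a..b, ω b ^ 2 * (1/t) := by rw [heq]
      _ = ω b ^ 2 * ∫ t in a..b, 1/t := intervalIntegral.integral_const_mul _ _
      _ = ω b ^ 2 * Real.log (b / a) := by rw [integral_one_div h0]
      _ = ω b ^ 2 * Real.log 2 := by
          congr 1
          have : b / a = 2 := by
            rw [ha, hb, pow_succ]
            field_simp
          rw [this]
  rw [mul_comm]
  exact hmono.trans_eq hcomp

/-- Dyadic decomposition bound for the integral. -/
lemma aux_dyadic (ω : ℝ → ℝ) (hωpos : ∀ t ∈ Set.Ioc (0:ℝ) 1, 0 < ω t)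
    (hωmono : MonotoneOn ω (Set.Ioc (0:ℝ) 1)) :
    ∀ K : ℕ, ∫ t in Set.Ioc ((2:ℝ)⁻¹^(K+1)) 1, ω t ^ 2 / t
      ≤ Real.log 2 * ∑ k ∈ Finset.range (K+1), ω ((2:ℝ)⁻¹^k) ^ 2 := by
  intro K
  induction K with
  | zero =>
      have h := aux_block ω hωpos hωmono 0
      simpa using h
  | succ K ih =>
      have ha0 : (0:ℝ) < (2:ℝ)⁻¹^(K+2) := by positivity
      have hb0 : (0:ℝ) < (2:ℝ)⁻¹^(K+1) := by positivity
      have hab : (2:ℝ)⁻¹^(K+2) ≤ (2:ℝ)⁻¹^(K+1) :=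
        pow_le_pow_of_le_one (by norm_num) (by norm_num) (by omega)
      have hb1 : (2:ℝ)⁻¹^(K+1) ≤ 1 := pow_le_one₀ (by norm_num) (by norm_num)
      have hsplit : Set.Ioc ((2:ℝ)⁻¹^(K+2)) 1
          = Set.Ioc ((2:ℝ)⁻¹^(K+2)) ((2:ℝ)⁻¹^(K+1)) ∪ Set.Ioc ((2:ℝ)⁻¹^(K+1)) 1 :=
        (Set.Ioc_union_Ioc_eq_Ioc hab hb1).symm
      have hint1 : IntegrableOn (fun t => ω t ^ 2 / t)
          (Set.Ioc ((2:ℝ)⁻¹^(K+2)) ((2:ℝ)⁻¹^(K+1))) :=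
        (aux_int ω hωpos hωmono ha0).mono_set (Set.Ioc_subset_Ioc_right hb1)
      have hint2 : IntegrableOn (fun t => ω t ^ 2 / t) (Set.Ioc ((2:ℝ)⁻¹^(K+1)) 1) :=
        aux_int ω hωpos hωmono hb0
      have hdisj : Disjoint (Set.Ioc ((2:ℝ)⁻¹^(K+2)) ((2:ℝ)⁻¹^(K+1)))
          (Set.Ioc ((2:ℝ)⁻¹^(K+1)) 1) := Set.Ioc_disjoint_Ioc_of_le le_rfl
      rw [hsplit, setIntegral_union hdisj measurableSet_Ioc hint1 hint2]
      have hblk := aux_block ω hωpos hωmono (K+1)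
      rw [Finset.sum_range_succ, mul_add]
      have : (K+1+1) = K+2 := rfl
      linarith [hblk, ih]

/-- Per-`k` lower bound coming from homogeneity and the sphere max condition. -/
lemma aux_key (d : ℕ) (hd : 1 ≤ d) (J : ℕ) (δ : ℝ) (hδ : 0 < δ)
    (P : ℕ → Fin J → EuclideanSpace ℂ (Fin d) → ℂ)
    (hPhom : ∀ (k : ℕ) (j : Fin J) (l : ℂ) (z : EuclideanSpace ℂ (Fin d)),
      P k j (l • z) = l ^ (2 ^ k - 1) * P k j z)
    (hPmax : ∀ k : ℕ, ∀ ξ ∈ sphere (0 : EuclideanSpace ℂ (Fin d)) 1,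
      ∃ j : Fin J, δ ≤ ‖P k j ξ‖)
    (z : EuclideanSpace ℂ (Fin d)) (k : ℕ) :
    ∃ j : Fin J, δ * ‖z‖ ^ (2 ^ k - 1) ≤ ‖P k j z‖ := by
  by_cases hz0 : z = 0
  · set ξ : EuclideanSpace ℂ (Fin d) := EuclideanSpace.single (⟨0, hd⟩ : Fin d) (1:ℂ) with hξ
    have hξn : ‖ξ‖ = 1 := by
      rw [hξ, EuclideanSpace.norm_single]; simp
    have hξs : ξ ∈ sphere (0 : EuclideanSpace ℂ (Fin d)) 1 := by
      simpa [mem_sphere_iff_norm] using hξn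
    obtain ⟨j, hj⟩ := hPmax k ξ hξs
    refine ⟨j, ?_⟩
    have hzero : P k j z = (0:ℂ) ^ (2^k - 1) * P k j ξ := by
      rw [hz0, ← hPhom k j 0 ξ, zero_smul]
    rw [hzero, norm_mul, norm_pow, norm_zero, hz0, norm_zero]
    calc δ * (0:ℝ) ^ (2^k-1) = (0:ℝ)^(2^k-1) * δ := by ring
      _ ≤ (0:ℝ)^(2^k-1) * ‖P k j ξ‖ :=
          mul_le_mul_of_nonneg_left hj (pow_nonneg le_rfl _)
  · have hzn : (0:ℝ) < ‖z‖ := norm_pos_iff.mpr hz0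
    have hz' : ((‖z‖ : ℂ)) ≠ 0 := by
      simpa using ne_of_gt hzn
    set ξ : EuclideanSpace ℂ (Fin d) := ((‖z‖ : ℂ))⁻¹ • z with hξ
    have hξn : ‖ξ‖ = 1 := by
      rw [hξ, norm_smul, norm_inv]
      rw [Complex.norm_real, Real.norm_of_nonneg hzn.le]
      field_simp
    have hξs : ξ ∈ sphere (0 : EuclideanSpace ℂ (Fin d)) 1 := by
      simpa [mem_sphere_iff_norm] using hξn
    obtain ⟨j, hj⟩ := hPmax k ξ hξs
    refine ⟨j, ?_⟩
    have hzz : z = ((‖z‖ : ℂ)) • ξ := (smul_inv_smul₀ hz' z).symm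
    have hP : P k j z = ((‖z‖ : ℂ)) ^ (2^k - 1) * P k j ξ := by
      conv_lhs => rw [hzz]
      exact hPhom k j _ ξ
    rw [hP, norm_mul, norm_pow, Complex.norm_real, Real.norm_of_nonneg hzn.le]
    calc δ * ‖z‖ ^ (2^k-1) = ‖z‖^(2^k-1) * δ := by ring
      _ ≤ ‖z‖^(2^k-1) * ‖P k j ξ‖ :=
          mul_le_mul_of_nonneg_left hj (pow_nonneg hzn.le _)

/-- `exp(-2) ≤ (r²)^(2^k - 1)` when `1 - r² ≤ 2⁻ᵏ`. -/
lemma aux_pow (r x : ℝ) (hx : x = 1 - r^2) (hx0 : 0 < x) (k : ℕ)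
    (hk : x ≤ (2:ℝ)⁻¹^k) : Real.exp (-2) ≤ (r^2)^(2^k - 1) := by
  rcases Nat.eq_zero_or_pos k with h0 | hk1
  · subst h0
    simp only [pow_zero, pow_succ]
    norm_num
  · set t : ℝ := (2:ℝ)⁻¹^k with htdef
    have ht0 : 0 < t := by positivity
    have ht2 : t ≤ 1/2 := by
      calc t ≤ (2:ℝ)⁻¹^1 := pow_le_pow_of_le_one (by norm_num) (by norm_num) hk1
        _ = 1/2 := by norm_num
    have h1 : Real.exp (-(2*t)) ≤ 1 - t := aux_exp_le ht0.le ht2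
    have h3 : Real.exp (-(2*t)) ≤ r^2 := by nlinarith
    have h4 : (Real.exp (-(2*t)))^(2^k-1) ≤ (r^2)^(2^k-1) :=
      pow_le_pow_left₀ (Real.exp_nonneg _) h3 _
    refine le_trans ?_ h4
    rw [← Real.exp_nat_mul]
    apply Real.exp_le_exp.mpr
    have hm : ((2^k - 1 : ℕ) : ℝ) = 2^k - 1 := by
      have : (1:ℕ) ≤ 2^k := Nat.one_le_two_pow
      push_cast [this]; ring
    have ht2k : t * 2^k = 1 := by
      rw [htdef, inv_pow]
      exact inv_mul_cancel₀ (by positivity)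
    rw [hm]
    nlinarith

/-- lower estimate `Σ_k Σ_j ω²(2^{-k}) |P_{k,j}(z)|² ≥ δ² C Φ(1-|z|²)` for
families of homogeneous polynomials of degree `2^k - 1` with `max_j |P_{k,j}| ≥ δ` on the
sphere. -/
theorem stmt18 (d : ℕ) (hd : 1 ≤ d) (ω : ℝ → ℝ)
    (hωpos : ∀ t ∈ Set.Ioc (0 : ℝ) 1, 0 < ω t)
    (hωmono : MonotoneOn ω (Set.Ioc (0 : ℝ) 1))
    (J : ℕ) (hJ : 1 ≤ J) (δ : ℝ) (hδ : 0 < δ)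
    (P : ℕ → Fin J → EuclideanSpace ℂ (Fin d) → ℂ)
    (hPhol : ∀ (k : ℕ) (j : Fin J), Differentiable ℂ (P k j))
    (hPhom : ∀ (k : ℕ) (j : Fin J) (l : ℂ) (z : EuclideanSpace ℂ (Fin d)),
      P k j (l • z) = l ^ (2 ^ k - 1) * P k j z)
    (hPmax : ∀ k : ℕ, ∀ ξ ∈ sphere (0 : EuclideanSpace ℂ (Fin d)) 1,
      ∃ j : Fin J, δ ≤ ‖P k j ξ‖) :
    ∃ C : ℝ, 0 < C ∧
      ∀ z ∈ ball (0 : EuclideanSpace ℂ (Fin d)) 1,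
        ENNReal.ofReal (δ ^ 2 * C * Phi ω (1 - ‖z‖ ^ 2)) ≤
          ∑' k : ℕ, ∑ j : Fin J, ENNReal.ofReal (ω ((2 : ℝ)⁻¹ ^ k) ^ 2 * ‖P k j z‖ ^ 2) := by
  classical
  have hω1 : 0 < ω 1 := hωpos 1 ⟨one_pos, le_refl 1⟩
  have hlog2 : 0 < Real.log 2 := Real.log_pos one_lt_two
  set A : ℝ := (ω 1)^2 with hA
  have hApos : 0 < A := pow_pos hω1 2
  set C : ℝ := Real.exp (-2) / (A⁻¹ + Real.log 2) with hC
  have hCpos : 0 < C := by positivity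
  refine ⟨C, hCpos, ?_⟩
  intro z hz
  set r : ℝ := ‖z‖ with hr
  have hr0 : 0 ≤ r := norm_nonneg z
  have hr1 : r < 1 := by rwa [mem_ball_zero_iff] at hz
  set x : ℝ := 1 - r^2 with hxdef
  have hx0 : 0 < x := by nlinarith
  have hx1 : x ≤ 1 := by nlinarith
  -- choose the dyadic level K
  have hex : ∃ n : ℕ, (2:ℝ)⁻¹ ^ n < x := by
    obtain ⟨n, hn⟩ := exists_pow_lt_of_lt_one hx0 (show (2:ℝ)⁻¹ < 1 by norm_num)
    exact ⟨n, hn⟩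
  set n0 := Nat.find hex with hn0def
  have hn0 : (2:ℝ)⁻¹ ^ n0 < x := Nat.find_spec hex
  have hn0pos : 1 ≤ n0 := by
    by_contra h
    push_neg at h
    interval_cases n0
    · simp at hn0; linarith
  set K := n0 - 1 with hKdef
  have hKn : K + 1 = n0 := Nat.succ_pred_eq_of_pos hn0pos
  have hxK : x ≤ (2:ℝ)⁻¹ ^ K := by
    by_contra h
    push_neg at h
    exact Nat.find_min hex (by omega) h
  -- notation
  set c : ℕ → ℝ := fun k => ω ((2:ℝ)⁻¹ ^ k) ^ 2 with hc
  have hcnonneg : ∀ k, 0 ≤ c k := fun k => sq_nonneg _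
  set S : ℝ := ∑ k ∈ Finset.range (K+1), c k with hS
  have hSA : A ≤ S := by
    have h0 : (0:ℕ) ∈ Finset.range (K+1) := by simp
    have h := Finset.single_le_sum (f := c) (fun i _ => hcnonneg i) h0
    have hc0 : c 0 = A := by rw [hc, hA]; norm_num
    rw [hS, ← hc0]
    exact h
  have hSpos : 0 < S := lt_of_lt_of_le hApos hSA
  -- bound on Phi
  have hPhi : Phi ω x ≤ (A⁻¹ + Real.log 2) * S := by
    have hsub : Set.Ioc x 1 ⊆ Set.Ioc ((2:ℝ)⁻¹^(K+1)) 1 := by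
      apply Set.Ioc_subset_Ioc_left
      rw [hKn]; exact hn0.le
    have hIKpos : (0:ℝ) < (2:ℝ)⁻¹^(K+1) := by positivity
    have hintK : IntegrableOn (fun t => ω t ^ 2 / t) (Set.Ioc ((2:ℝ)⁻¹^(K+1)) 1) :=
      aux_int ω hωpos hωmono hIKpos
    have hmonoset : ∫ t in Set.Ioc x 1, ω t ^ 2 / t
        ≤ ∫ t in Set.Ioc ((2:ℝ)⁻¹^(K+1)) 1, ω t ^ 2 / t := by
      apply setIntegral_mono_set hintK ?_ (HasSubset.Subset.eventuallyLE hsub)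
      filter_upwards [self_mem_ae_restrict
        (measurableSet_Ioc : MeasurableSet (Set.Ioc ((2:ℝ)⁻¹^(K+1)) 1))] with t ht
      exact div_nonneg (sq_nonneg _) (le_of_lt (lt_trans hIKpos ht.1))
    have hdy := aux_dyadic ω hωpos hωmono K
    have h1S : 1 ≤ A⁻¹ * S := by
      have h := mul_le_mul_of_nonneg_left hSA (inv_nonneg.mpr hApos.le)
      rwa [inv_mul_cancel₀ hApos.ne'] at h
    calc Phi ω x = 1 + ∫ t in Set.Ioc x 1, ω t ^ 2 / t := rfl
      _ ≤ A⁻¹ * S + Real.log 2 * S := add_le_add h1S (hmonoset.trans hdy)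
      _ = (A⁻¹ + Real.log 2) * S := by ring
  -- per-k polynomial lower bound and power bound
  have hkey : ∀ k ∈ Finset.range (K+1),
      ENNReal.ofReal (δ^2 * Real.exp (-2) * c k)
        ≤ ∑ j : Fin J, ENNReal.ofReal (c k * ‖P k j z‖ ^ 2) := by
    intro k hk
    obtain ⟨j, hj⟩ := aux_key d hd J δ hδ P hPhom hPmax z k
    have hkK : k ≤ K := by
      have := Finset.mem_range.mp hk; omega
    have hxk : x ≤ (2:ℝ)⁻¹ ^ k :=
      hxK.trans (pow_le_pow_of_le_one (by norm_num) (by norm_num) hkK)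
    have hpow : Real.exp (-2) ≤ (r^2)^(2^k - 1) := aux_pow r x hxdef hx0 k hxk
    have hnorm : δ^2 * (r^2)^(2^k-1) ≤ ‖P k j z‖^2 := by
      have h1 : (δ * r^(2^k-1))^2 ≤ ‖P k j z‖^2 :=
        pow_le_pow_left₀ (by positivity) hj 2
      calc δ^2 * (r^2)^(2^k-1) = (δ * r^(2^k-1))^2 := by
            rw [mul_pow, ← pow_mul, ← pow_mul, Nat.mul_comm]
        _ ≤ _ := h1
    have hterm : δ^2 * Real.exp (-2) * c k ≤ c k * ‖P k j z‖^2 := by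
      have h2 : δ^2 * Real.exp (-2) ≤ ‖P k j z‖^2 := by
        refine le_trans ?_ hnorm
        exact mul_le_mul_of_nonneg_left hpow (by positivity)
      calc δ^2 * Real.exp (-2) * c k = c k * (δ^2 * Real.exp (-2)) := by ring
        _ ≤ c k * ‖P k j z‖^2 := mul_le_mul_of_nonneg_left h2 (hcnonneg k)
    calc ENNReal.ofReal (δ^2 * Real.exp (-2) * c k)
        ≤ ENNReal.ofReal (c k * ‖P k j z‖^2) := ENNReal.ofReal_le_ofReal hterm
      _ ≤ ∑ j : Fin J, ENNReal.ofReal (c k * ‖P k j z‖^2) :=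
          Finset.single_le_sum (f := fun i => ENNReal.ofReal (c k * ‖P k i z‖^2)) (fun i _ => zero_le) (Finset.mem_univ j)
  have hsum : ENNReal.ofReal (δ^2 * Real.exp (-2) * S)
      ≤ ∑' k : ℕ, ∑ j : Fin J, ENNReal.ofReal (c k * ‖P k j z‖^2) := by
    have h1 : ENNReal.ofReal (δ^2 * Real.exp (-2) * S)
        = ∑ k ∈ Finset.range (K+1), ENNReal.ofReal (δ^2 * Real.exp (-2) * c k) := by
      rw [hS, Finset.mul_sum, ENNReal.ofReal_sum_of_nonneg]
      intro i _
      have := hcnonneg i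
      positivity
    rw [h1]
    calc ∑ k ∈ Finset.range (K+1), ENNReal.ofReal (δ^2 * Real.exp (-2) * c k)
        ≤ ∑ k ∈ Finset.range (K+1), ∑ j : Fin J, ENNReal.ofReal (c k * ‖P k j z‖^2) :=
          Finset.sum_le_sum hkey
      _ ≤ ∑' k : ℕ, ∑ j : Fin J, ENNReal.ofReal (c k * ‖P k j z‖^2) :=
          ENNReal.sum_le_tsum _
  simp only [hc] at hsum
  refine le_trans ?_ hsum
  apply ENNReal.ofReal_le_ofReal
  have hden : (0:ℝ) < A⁻¹ + Real.log 2 := by positivity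
  calc δ^2 * C * Phi ω x ≤ δ^2 * C * ((A⁻¹ + Real.log 2) * S) := by
        apply mul_le_mul_of_nonneg_left hPhi (by positivity)
    _ = δ^2 * Real.exp (-2) * S := by
        rw [hC]
        field_simp
end
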